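/- arXiv:2402.09003 — 3 statements merged into one kernel-verified Lean document; each statement's English description precedes it below -/
import Mathlib

section
/- For d ≥ 2, the integral ∫₀² u^{d-1} I_{1-(u/2)²}((d+1)/2, 1/2) du equals 2^d · B((d+1)/2,(d+1)/2) / (d · B((d+1)/2,1/2)), where I_μ(p,q) is the regularized incomplete beta function and B is the beta function. -/
open Real

/-- Regularized incomplete beta function `I_μ(p,q)`. -/
noncomputable def regIncBeta (μ p q : ℝ) : ℝ :=
  (Real.Gamma (p + q) / (Real.Gamma p * Real.Gamma q)) *
    ∫ t in (0:ℝ)..μ, t ^ (p - 1) * (1 - t) ^ (q - 1)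

/-- Beta function `B(p,q) = Γ(p)Γ(q)/Γ(p+q)`. -/
noncomputable def betaFn (p q : ℝ) : ℝ := Real.Gamma p * Real.Gamma q / Real.Gamma (p + q)

section Aux
open intervalIntegral MeasureTheory Set


lemma realBeta {p q : ℝ} (hp : 0 < p) (hq : 0 < q) :
    ∫ t in (0:ℝ)..1, t ^ (p - 1) * (1 - t) ^ (q - 1)
      = Real.Gamma p * Real.Gamma q / Real.Gamma (p + q) := by
  have h := Complex.Gamma_mul_Gamma_eq_betaIntegral (s := (p:ℂ)) (t := (q:ℂ))
    (by simpa using hp) (by simpa using hq)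
  have hbeta : Complex.betaIntegral (p:ℂ) (q:ℂ)
      = ((∫ t in (0:ℝ)..1, t ^ (p - 1) * (1 - t) ^ (q - 1) : ℝ) : ℂ) := by
    rw [Complex.betaIntegral, ← intervalIntegral.integral_ofReal]
    refine intervalIntegral.integral_congr_ae ?_
    filter_upwards with x hx
    rw [Set.uIoc_of_le (by norm_num : (0:ℝ) ≤ 1)] at hx
    rw [show ((p:ℂ) - 1) = ((p - 1 : ℝ) : ℂ) by push_cast; ring,
      show ((q:ℂ) - 1) = ((q - 1 : ℝ) : ℂ) by push_cast; ring,
      show ((1:ℂ) - (x:ℂ)) = ((1 - x : ℝ) : ℂ) by push_cast; ring,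
      ← Complex.ofReal_cpow hx.1.le, ← Complex.ofReal_cpow (by linarith [hx.2] : (0:ℝ) ≤ 1 - x),
      ← Complex.ofReal_mul]
  rw [hbeta, ← Complex.ofReal_add, Complex.Gamma_ofReal, Complex.Gamma_ofReal,
    Complex.Gamma_ofReal, ← Complex.ofReal_mul, ← Complex.ofReal_mul] at h
  have := Complex.ofReal_inj.mp h
  have hne : Real.Gamma (p + q) ≠ 0 := (Real.Gamma_pos_of_pos (by linarith)).ne'
  field_simp
  linarith [this]

lemma auxContH {a : ℝ} (ha : 0 < a) : Continuous fun s : ℝ => (1 - s ^ 2) ^ a :=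
  (continuous_const.sub (continuous_pow 2)).rpow_const fun _ => Or.inr ha.le

lemma auxContF {a : ℝ} (ha : 0 < a) :
    ContinuousOn (fun t : ℝ => t ^ a * (1 - t) ^ ((1:ℝ)/2 - 1)) (Set.Iio 1) := by
  apply ContinuousOn.mul
  · exact (continuous_id.rpow_const fun _ => Or.inr ha.le).continuousOn
  · refine (continuous_const.sub continuous_id).continuousOn.rpow_const ?_
    intro x hx
    left
    simp only [Set.mem_Iio, id_eq] at hx ⊢
    have h1 : (0:ℝ) < 1 - x := by linarith
    exact ne_of_gt h1

/-- `G` has derivative `-(1-(u/2)^2)^a` everywhere. -/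
lemma auxDerivG {a : ℝ} (ha : 0 < a) (u : ℝ) :
    HasDerivAt (fun u : ℝ => 2 * ∫ s in (u/2)..(1:ℝ), (1 - s ^ 2) ^ a)
      (-((1 - (u/2) ^ 2) ^ a)) u := by
  have h1 : HasDerivAt (fun x : ℝ => ∫ s in x..(1:ℝ), (1 - s ^ 2) ^ a)
      (-((1 - (u/2) ^ 2) ^ a)) (u/2) :=
    intervalIntegral.integral_hasDerivAt_left ((auxContH ha).intervalIntegrable _ _)
      ((auxContH ha).stronglyMeasurableAtFilter _ _) (auxContH ha).continuousAt
  have h2 : HasDerivAt (fun u : ℝ => u/2) (1/2) u := (hasDerivAt_id u).div_const 2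
  have := (h1.comp u h2).const_mul 2
  exact this.congr_deriv (by ring)

/-- `F` has derivative `-(1-(u/2)^2)^a` for `u > 0`. -/
lemma auxDerivF {a : ℝ} (ha : 0 < a) {u : ℝ} (hu : 0 < u) :
    HasDerivAt (fun u : ℝ => ∫ t in (0:ℝ)..(1 - (u/2) ^ 2),
        t ^ a * (1 - t) ^ ((1:ℝ)/2 - 1))
      (-((1 - (u/2) ^ 2) ^ a)) u := by
  set f : ℝ → ℝ := fun t => t ^ a * (1 - t) ^ ((1:ℝ)/2 - 1) with hf
  have hgu : 1 - (u/2) ^ 2 < 1 := by nlinarith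
  have hsub : Set.uIcc (0:ℝ) (1 - (u/2) ^ 2) ⊆ Set.Iio 1 := by
    intro x hx
    rw [Set.mem_uIcc] at hx
    simp only [Set.mem_Iio]
    rcases hx with ⟨_, h⟩ | ⟨_, h⟩ <;> linarith
  have hint : IntervalIntegrable f volume 0 (1 - (u/2) ^ 2) :=
    ((auxContF ha).mono hsub).intervalIntegrable
  have houter : HasDerivAt (fun x => ∫ t in (0:ℝ)..x, f t) (f (1 - (u/2) ^ 2))
      (1 - (u/2) ^ 2) :=
    intervalIntegral.integral_hasDerivAt_right hint
      ((auxContF ha).stronglyMeasurableAtFilter isOpen_Iio _ hgu)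
      ((auxContF ha).continuousAt (Iio_mem_nhds hgu))
  have hinner : HasDerivAt (fun u : ℝ => 1 - (u/2) ^ 2) (-(u/2)) u := by
    have h0 : HasDerivAt (fun u : ℝ => (u/2) ^ 2) (2 * (u/2) ^ 1 * (1/2)) u :=
      ((hasDerivAt_id u).div_const 2).pow 2
    have := h0.const_sub 1
    exact this.congr_deriv (by ring)
  have := houter.comp u hinner
  refine this.congr_deriv ?_
  have hx2 : (1:ℝ) - (1 - (u/2) ^ 2) = (u/2) ^ 2 := by ring
  have hpow : ((u/2) ^ 2 : ℝ) ^ ((1:ℝ)/2 - 1) = (u/2)⁻¹ := by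
    rw [← Real.rpow_natCast (u/2) 2, ← Real.rpow_mul (by positivity),
      show ((2:ℕ):ℝ) * ((1:ℝ)/2 - 1) = -1 by push_cast; ring, Real.rpow_neg_one]
  simp only [hf, Function.comp]
  rw [hx2, hpow]
  field_simp

/-- `F = G` on `(0, 2]`. -/
lemma auxFG {a : ℝ} (ha : 0 < a) {u₀ : ℝ} (hu₀ : u₀ ∈ Set.Ioc (0:ℝ) 2) :
    (∫ t in (0:ℝ)..(1 - (u₀/2) ^ 2), t ^ a * (1 - t) ^ ((1:ℝ)/2 - 1))
      = 2 * ∫ s in (u₀/2)..(1:ℝ), (1 - s ^ 2) ^ a := by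
  set F : ℝ → ℝ := fun u => ∫ t in (0:ℝ)..(1 - (u/2) ^ 2),
    t ^ a * (1 - t) ^ ((1:ℝ)/2 - 1) with hF
  set G : ℝ → ℝ := fun u => 2 * ∫ s in (u/2)..(1:ℝ), (1 - s ^ 2) ^ a with hG
  show F u₀ = G u₀
  have key := constant_of_has_deriv_right_zero (f := fun x => F x - G x) (a := u₀) (b := 2)
    (fun x hx => (((auxDerivF ha (lt_of_lt_of_le hu₀.1 hx.1)).sub
      (auxDerivG ha x)).continuousAt).continuousWithinAt)
    (fun x hx => by
      have hder := (auxDerivF ha (lt_of_lt_of_le hu₀.1 hx.1)).sub (auxDerivG ha x)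
      rw [sub_self] at hder
      exact hder.hasDerivWithinAt)
  have h2 : F 2 - G 2 = F u₀ - G u₀ := key 2 ⟨hu₀.2, le_refl 2⟩
  have hF2 : F 2 = 0 := by simp [hF]
  have hG2 : G 2 = 0 := by simp [hG]
  rw [hF2, hG2] at h2
  linarith

/-- Integration by parts. -/
lemma auxIBP {a : ℝ} (ha : 0 < a) (d : ℕ) (hd : 1 ≤ d) :
    (∫ x in (0:ℝ)..2, x ^ (d-1) * (2 * ∫ s in (x/2)..(1:ℝ), (1 - s ^ 2) ^ a))
      = (1/(d:ℝ)) * ∫ x in (0:ℝ)..2, x ^ d * (1 - (x/2) ^ 2) ^ a := by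
  set G : ℝ → ℝ := fun u => 2 * ∫ s in (u/2)..(1:ℝ), (1 - s ^ 2) ^ a with hG
  have hibp := intervalIntegral.integral_mul_deriv_eq_deriv_mul
    (u := G) (u' := fun x => -((1 - (x/2) ^ 2) ^ a))
    (v := fun x : ℝ => x ^ d) (v' := fun x => (d:ℝ) * x ^ (d-1))
    (a := 0) (b := 2)
    (fun x _ => auxDerivG ha x)
    (fun x _ => hasDerivAt_pow d x)
    (((auxContH ha).comp (continuous_id.div_const 2)).neg.intervalIntegrable _ _)
    ((continuous_const.mul (continuous_pow (d-1))).intervalIntegrable _ _)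
  show (∫ x in (0:ℝ)..2, x ^ (d-1) * G x)
      = (1/(d:ℝ)) * ∫ x in (0:ℝ)..2, x ^ d * (1 - (x/2) ^ 2) ^ a
  have hG2 : G 2 = 0 := by simp [hG]
  simp only [hG2, zero_mul, zero_sub, sub_zero, mul_zero,
    zero_pow (show d ≠ 0 by omega), neg_mul, intervalIntegral.integral_neg, neg_neg] at hibp
  have e1 : (∫ x in (0:ℝ)..2, G x * ((d:ℝ) * x ^ (d-1)))
      = (d:ℝ) * ∫ x in (0:ℝ)..2, x ^ (d-1) * G x := by
    rw [← intervalIntegral.integral_const_mul]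
    congr 1
    funext x
    ring
  have e2 : (∫ x in (0:ℝ)..2, ((1 - (x/2) ^ 2) ^ a) * x ^ d)
      = ∫ x in (0:ℝ)..2, x ^ d * (1 - (x/2) ^ 2) ^ a := by
    congr 1
    funext x
    ring
  rw [e1, e2] at hibp
  rw [← hibp]
  have hdne : (d:ℝ) ≠ 0 := by positivity
  field_simp

lemma auxSub1 {a : ℝ} (d : ℕ) :
    (∫ x in (0:ℝ)..2, x ^ d * (1 - (x/2) ^ 2) ^ a)
      = 2 ^ (d+1) * ∫ s in (0:ℝ)..1, s ^ d * (1 - s ^ 2) ^ a := by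
  rw [show (∫ x in (0:ℝ)..2, x ^ d * (1 - (x/2) ^ 2) ^ a)
      = ∫ x in (0:ℝ)..2, (fun y : ℝ => (2*y) ^ d * (1 - y ^ 2) ^ a) (x/2) from
    intervalIntegral.integral_congr (fun x _ => by
      simp only
      rw [show (2:ℝ) * (x/2) = x by ring])]
  rw [intervalIntegral.integral_comp_div (a := (0:ℝ)) (b := 2) (c := 2)
    (f := fun y : ℝ => (2*y) ^ d * (1 - y ^ 2) ^ a) two_ne_zero]
  norm_num
  simp_rw [mul_pow, mul_assoc]
  rw [intervalIntegral.integral_const_mul]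
  ring

lemma auxSub2 {a : ℝ} (ha : 0 < a) (d : ℕ) (hd : 2 ≤ d) (h2a : 2 * a = (d:ℝ) - 1) :
    (∫ s in (0:ℝ)..1, s ^ d * (1 - s ^ 2) ^ a)
      = (1/2) * ∫ t in (0:ℝ)..1, t ^ a * (1 - t) ^ a := by
  have hcont : Continuous fun t : ℝ => t ^ a * (1 - t) ^ a :=
    (continuous_id.rpow_const fun _ => Or.inr ha.le).mul
      ((continuous_const.sub continuous_id).rpow_const fun _ => Or.inr ha.le)
  have hsub := intervalIntegral.integral_comp_smul_deriv (a := (0:ℝ)) (b := 1)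
    (f := fun s => s ^ 2) (f' := fun s => 2 * s)
    (g := fun t => t ^ a * (1 - t) ^ a)
    (fun x _ => by simpa using hasDerivAt_pow 2 x)
    (continuous_const.mul continuous_id).continuousOn hcont
  norm_num at hsub
  have key : Set.EqOn (fun x : ℝ => 2 * (x ^ d * (1 - x ^ 2) ^ a))
      (fun x : ℝ => (2*x) * ((x ^ 2) ^ a * (1 - x ^ 2) ^ a)) (Set.uIcc 0 1) := by
    intro x hx
    rw [Set.uIcc_of_le (by norm_num : (0:ℝ) ≤ 1)] at hx
    simp only
    rcases eq_or_lt_of_le hx.1 with h0 | h0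
    · rw [← h0]
      simp [zero_pow (show d ≠ 0 by omega)]
    · have e1 : ((x ^ 2 : ℝ)) ^ a = x ^ (2*a) := by
        rw [← Real.rpow_natCast x 2, ← Real.rpow_mul h0.le]
        norm_num
      have e2 : x * x ^ (2*a) = x ^ d := by
        have h3 := Real.rpow_add h0 1 ((d:ℝ) - 1)
        rw [Real.rpow_one] at h3
        rw [h2a, ← h3, ← Real.rpow_natCast x d]
        congr 1
        ring
      rw [e1, ← e2]
      ring
  have h3 : (∫ x in (0:ℝ)..1, 2 * (x ^ d * (1 - x ^ 2) ^ a))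
      = ∫ t in (0:ℝ)..1, t ^ a * (1 - t) ^ a := by
    rw [intervalIntegral.integral_congr key]
    exact hsub
  rw [intervalIntegral.integral_const_mul] at h3
  linarith

end Aux

theorem stmt0 (d : ℕ) (hd : 2 ≤ d) :
    ∫ u in (0:ℝ)..2, u ^ (d - 1) * regIncBeta (1 - (u / 2) ^ 2) (((d : ℝ) + 1) / 2) (1 / 2)
      = 2 ^ d * betaFn (((d : ℝ) + 1) / 2) (((d : ℝ) + 1) / 2) /
          (d * betaFn (((d : ℝ) + 1) / 2) (1 / 2)) := by
  have hd2 : (2:ℝ) ≤ (d:ℝ) := by exact_mod_cast hd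
  set p : ℝ := ((d:ℝ) + 1) / 2 with hp
  have ha : 0 < p - 1 := by rw [hp]; linarith
  have hp0 : 0 < p := by linarith
  set C : ℝ := Real.Gamma (p + 1/2) / (Real.Gamma p * Real.Gamma (1/2)) with hC
  have step1 : (∫ u in (0:ℝ)..2, u ^ (d - 1) * regIncBeta (1 - (u / 2) ^ 2) p (1/2))
      = C * ∫ u in (0:ℝ)..2, u ^ (d-1) * (2 * ∫ s in (u/2)..(1:ℝ), (1 - s ^ 2) ^ (p-1)) := by
    rw [← intervalIntegral.integral_const_mul]
    refine intervalIntegral.integral_congr_ae ?_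
    filter_upwards with u hu
    rw [Set.uIoc_of_le (by norm_num : (0:ℝ) ≤ 2)] at hu
    simp only [regIncBeta]
    rw [auxFG ha hu]
    ring
  rw [step1, auxIBP ha d (by omega), auxSub1 d, auxSub2 ha d hd (by rw [hp]; ring),
    realBeta hp0 hp0]
  simp only [betaFn, hC]
  have h1 : Real.Gamma p ≠ 0 := (Real.Gamma_pos_of_pos hp0).ne'
  have h2 : Real.Gamma (1/2 : ℝ) ≠ 0 := (Real.Gamma_pos_of_pos (by norm_num)).ne'
  have h3 : Real.Gamma (p + p) ≠ 0 := (Real.Gamma_pos_of_pos (by linarith)).ne'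
  have h4 : Real.Gamma (p + 1/2) ≠ 0 := (Real.Gamma_pos_of_pos (by linarith)).ne'
  have h5 : (d:ℝ) ≠ 0 := by positivity
  field_simp
  ring
end

section
/- Let φ(x,y,ρ) = (1/(2π√(1−ρ²))) exp(−(x² + y² − 2ρxy)/(2(1−ρ²))) be the bivariate standard normal density with correlation ρ ∈ (−1,1), and let φ(y) be the standard normal density. Then for every u ∈ ℝ and ρ ∈ [0,1): ∫_u^∞ ∫_u^∞ φ(x,y,ρ) dx dy = (∫_u^∞ φ(y) dy)² + (1/(2π)) ∫₀^ρ exp(−u²/(1+v)) (1−v²)^{-1/2} dv. -/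
open Real MeasureTheory Filter

/-- Standard Gaussian density. -/
noncomputable def gphi (y : ℝ) : ℝ := (1 / Real.sqrt (2 * π)) * Real.exp (-y ^ 2 / 2)

/-- Bivariate standard Gaussian density with correlation `ρ`. -/
noncomputable def biphi (x y ρ : ℝ) : ℝ :=
  (1 / (2 * π * Real.sqrt (1 - ρ ^ 2))) *
    Real.exp (-(x ^ 2 + y ^ 2 - 2 * ρ * x * y) / (2 * (1 - ρ ^ 2)))

noncomputable def g1 (x y v : ℝ) : ℝ := biphi x y v * (-(x - v*y)/(1 - v^2))
noncomputable def D2 (x y v : ℝ) : ℝ :=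
  biphi x y v * (((x - v*y)*(y - v*x) + v*(1 - v^2)) / (1 - v^2)^2)
noncomputable def KK (ρ : ℝ) : ℝ := (1/(2*π*Real.sqrt (1-ρ^2))) * (192/(1-ρ^2)^2)


lemma biphi_comm (x y v : ℝ) : biphi x y v = biphi y x v := by
  simp only [biphi]; ring_nf

lemma hasDerivAt_biphi_x (y v : ℝ) (hv : v^2 < 1) (x : ℝ) :
    HasDerivAt (fun x => biphi x y v) (biphi x y v * (-(x - v*y)/(1 - v^2))) x := by
  have hS : (0:ℝ) < 1 - v^2 := by nlinarith
  have hs : Real.sqrt (1 - v^2) ≠ 0 := (Real.sqrt_pos.2 hS).ne'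
  have h1 : HasDerivAt (fun x : ℝ => x ^ 2 + y ^ 2 - 2*v*x*y) (2*x - 2*v*y) x := by
    have hp : HasDerivAt (fun x : ℝ => x ^ 2) (2*x) x := by simpa using hasDerivAt_pow 2 x
    have hl : HasDerivAt (fun x : ℝ => 2*v*x*y) (2*v*y) x := by
      have := (hasDerivAt_id x).const_mul (2*v*y)
      simp only [mul_one, id_eq] at this
      exact this.congr_of_eventuallyEq (Eventually.of_forall fun t => by ring)
    exact (hp.add_const (y ^ 2)).sub hl
  have hq : HasDerivAt (fun x : ℝ => -(x ^ 2 + y ^ 2 - 2*v*x*y) / (2*(1 - v ^ 2)))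
      ((-(2*x - 2*v*y)) / (2*(1 - v ^ 2))) x := (h1.neg).div_const _
  have h2 := (hq.exp).const_mul (1 / (2*π*Real.sqrt (1 - v ^ 2)))
  have : biphi x y v * (-(x - v*y)/(1 - v^2))
      = (1 / (2*π*Real.sqrt (1 - v ^ 2))) *
        (Real.exp (-(x ^ 2 + y ^ 2 - 2*v*x*y) / (2*(1 - v ^ 2))) * ((-(2*x - 2*v*y)) / (2*(1 - v ^ 2)))) := by
    simp only [biphi]
    field_simp [Real.pi_ne_zero, hs, hS.ne']
  rw [this]
  exact h2

lemma hasDerivAt_biphi_y (x v : ℝ) (hv : v^2 < 1) (y : ℝ) :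
    HasDerivAt (fun y => biphi x y v) (biphi x y v * (-(y - v*x)/(1 - v^2))) y := by
  have := hasDerivAt_biphi_x x v hv y
  rw [show (fun y => biphi x y v) = (fun y => biphi y x v) from funext fun t => biphi_comm x t v]
  rw [biphi_comm x y v]
  exact this




-- mixed partial: d/dy g1 = D2
lemma hasDerivAt_g1_y (x v : ℝ) (hv : v^2 < 1) (y : ℝ) :
    HasDerivAt (fun y => g1 x y v) (D2 x y v) y := by
  have hS : (0:ℝ) < 1 - v^2 := by nlinarith
  have hL : HasDerivAt (fun y : ℝ => -(x - v*y)/(1 - v^2)) (v/(1 - v^2)) y := by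
    have h0 : HasDerivAt (fun y : ℝ => -(x - v*y)) v y := by
      have := ((hasDerivAt_id y).const_mul v).const_sub x
      simp only [mul_one, id_eq] at this
      exact this.neg.congr_deriv (neg_neg v)
    simpa [hS.ne'] using h0.div_const (1 - v^2)
  have h := (hasDerivAt_biphi_y x v hv y).mul hL
  have : D2 x y v = (biphi x y v * (-(y - v*x)/(1 - v^2))) * (-(x - v*y)/(1 - v^2))
      + biphi x y v * (v/(1 - v^2)) := by
    simp only [D2]
    field_simp
  rw [this]; exact h

-- v-derivative equals D2
lemma hasDerivAt_biphi_v (x y v : ℝ) (hv : v^2 < 1) :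
    HasDerivAt (fun v => biphi x y v) (D2 x y v) v := by
  have hS : (0:ℝ) < 1 - v^2 := by nlinarith
  have hsp : 0 < Real.sqrt (1 - v^2) := Real.sqrt_pos.2 hS
  have hS' : HasDerivAt (fun v : ℝ => 1 - v ^ 2) (-(2*v)) v := by
    simpa using ((hasDerivAt_pow 2 v).const_sub 1)
  have hsqrt : HasDerivAt (fun v : ℝ => Real.sqrt (1 - v ^ 2)) (-(2*v) / (2 * Real.sqrt (1 - v^2))) v := by
    have := (Real.hasDerivAt_sqrt hS.ne').comp v hS'
    simpa [mul_comm, div_eq_mul_inv, Function.comp_def] using this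
  have hden : HasDerivAt (fun v : ℝ => 2 * π * Real.sqrt (1 - v ^ 2))
      (2 * π * (-(2*v) / (2 * Real.sqrt (1 - v^2)))) v := hsqrt.const_mul _
  have hne : 2 * π * Real.sqrt (1 - v ^ 2) ≠ 0 := by positivity
  have hinv : HasDerivAt (fun v : ℝ => 1 / (2 * π * Real.sqrt (1 - v ^ 2)))
      (-(2 * π * (-(2*v) / (2 * Real.sqrt (1 - v^2)))) / (2 * π * Real.sqrt (1 - v ^ 2))^2) v := by
    simpa [one_div, Pi.inv_def] using hden.inv hne
  have hnum : HasDerivAt (fun v : ℝ => -(x ^ 2 + y ^ 2 - 2 * v * x * y)) (2*x*y) v := by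
    have : HasDerivAt (fun v : ℝ => 2 * v * x * y) (2*x*y) v := by
      have := (hasDerivAt_id v).const_mul (2*x*y)
      simp only [mul_one, id_eq] at this
      exact this.congr_of_eventuallyEq (Eventually.of_forall fun t => by ring)
    exact (this.const_sub (x^2 + y^2)).neg.congr_deriv (neg_neg _)
  have hden2 : HasDerivAt (fun v : ℝ => 2 * (1 - v ^ 2)) (2 * (-(2*v))) v := hS'.const_mul 2
  have hden2ne : 2 * (1 - v ^ 2) ≠ 0 := by positivity
  have hE : HasDerivAt (fun v : ℝ => -(x ^ 2 + y ^ 2 - 2 * v * x * y) / (2 * (1 - v ^ 2)))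
      ((2*x*y * (2 * (1 - v ^ 2)) - (-(x ^ 2 + y ^ 2 - 2 * v * x * y)) * (2 * (-(2*v)))) / (2 * (1 - v ^ 2))^2)
      v := hnum.div hden2 hden2ne
  have htot := hinv.mul hE.exp
  have hval : D2 x y v =
      (-(2 * π * (-(2*v) / (2 * Real.sqrt (1 - v^2)))) / (2 * π * Real.sqrt (1 - v ^ 2))^2) *
        Real.exp (-(x ^ 2 + y ^ 2 - 2 * v * x * y) / (2 * (1 - v ^ 2)))
      + (1 / (2 * π * Real.sqrt (1 - v ^ 2))) *
        (Real.exp (-(x ^ 2 + y ^ 2 - 2 * v * x * y) / (2 * (1 - v ^ 2))) *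
          ((2*x*y * (2 * (1 - v ^ 2)) - (-(x ^ 2 + y ^ 2 - 2 * v * x * y)) * (2 * (-(2*v)))) / (2 * (1 - v ^ 2))^2)) := by
    simp only [D2, biphi]
    set t := Real.sqrt (1 - v^2) with hts
    have htpos : 0 < t := hsp
    have ht2 : t^2 = 1 - v^2 := Real.sq_sqrt hS.le
    rw [show (1:ℝ) - v^2 = t^2 from (Real.sq_sqrt hS.le).symm]
    generalize Real.exp (-(x ^ 2 + y ^ 2 - 2 * v * x * y) / (2 * t ^ 2)) = E
    field_simp
    linear_combination (-(E*x*y)) * ht2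
  rw [hval]
  exact htot


lemma biphi_nonneg (x y v : ℝ) : 0 ≤ biphi x y v := by
  unfold biphi; positivity

lemma one_add_sq_le (x : ℝ) : 1 + x^2 ≤ 8 * Real.exp (x^2/8) := by
  nlinarith [Real.add_one_le_exp (x^2/8)]

lemma biphi_le {ρ v : ℝ} (hρ1 : ρ < 1) (hv0 : 0 ≤ v) (hvρ : v ≤ ρ) (x y : ℝ) :
    biphi x y v ≤ (1/(2*π*Real.sqrt (1-ρ^2))) * Real.exp (-(x^2+y^2)/4) := by
  have hv1 : v < 1 := lt_of_le_of_lt hvρ hρ1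
  have hSv : (0:ℝ) < 1 - v^2 := by nlinarith
  have hSρ : (0:ℝ) < 1 - ρ^2 := by nlinarith
  unfold biphi
  have h1 : 1 / (2 * π * Real.sqrt (1 - v ^ 2)) ≤ 1 / (2 * π * Real.sqrt (1 - ρ ^ 2)) := by
    apply one_div_le_one_div_of_le (by positivity)
    have : Real.sqrt (1 - ρ^2) ≤ Real.sqrt (1 - v^2) := Real.sqrt_le_sqrt (by nlinarith)
    nlinarith [Real.pi_pos]
  have h2 : Real.exp (-(x ^ 2 + y ^ 2 - 2 * v * x * y) / (2 * (1 - v ^ 2)))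
      ≤ Real.exp (-(x^2+y^2)/4) := by
    rw [Real.exp_le_exp, div_le_div_iff₀ (by positivity) (by norm_num), neg_mul, neg_mul,
      neg_le_neg_iff]
    nlinarith [mul_nonneg hv0 (sq_nonneg (x-y)),
      mul_nonneg (sq_nonneg (1-v)) (add_nonneg (sq_nonneg x) (sq_nonneg y))]
  exact mul_le_mul h1 h2 (Real.exp_nonneg _) (by positivity)

lemma exp_key (x y : ℝ) : Real.exp (-(x^2+y^2)/4) * ((1+x^2)*(1+y^2))
    ≤ 64 * (Real.exp (-x^2/8) * Real.exp (-y^2/8)) := by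
  have e1 : 1 + x^2 ≤ 8 * Real.exp (x^2/8) := one_add_sq_le x
  have e2 : 1 + y^2 ≤ 8 * Real.exp (y^2/8) := one_add_sq_le y
  have h : Real.exp (-(x^2+y^2)/4) * ((1+x^2)*(1+y^2))
      ≤ Real.exp (-(x^2+y^2)/4) * ((8 * Real.exp (x^2/8)) * (8 * Real.exp (y^2/8))) := by
    apply mul_le_mul_of_nonneg_left ?_ (Real.exp_nonneg _)
    exact mul_le_mul e1 e2 (by positivity) (by positivity)
  refine h.trans (le_of_eq ?_)
  calc Real.exp (-(x^2+y^2)/4) * ((8 * Real.exp (x^2/8)) * (8 * Real.exp (y^2/8)))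
      = 64 * Real.exp (-(x^2+y^2)/4 + (x^2/8 + y^2/8)) := by
        rw [Real.exp_add, Real.exp_add]; ring
    _ = 64 * (Real.exp (-x^2/8) * Real.exp (-y^2/8)) := by
        rw [← Real.exp_add]
        congr 1
        ring

lemma master {ρ v : ℝ} (hρ1 : ρ < 1) (hv0 : 0 ≤ v) (hvρ : v ≤ ρ) (x y r : ℝ)
    (hr : |r| ≤ 3*(1+x^2)*(1+y^2)/(1-ρ^2)^2) :
    |biphi x y v * r| ≤ KK ρ * (Real.exp (-x^2/8) * Real.exp (-y^2/8)) := by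
  have hv1 : v < 1 := lt_of_le_of_lt hvρ hρ1
  have hSρ : (0:ℝ) < 1 - ρ^2 := by nlinarith
  have hb := biphi_le hρ1 hv0 hvρ x y
  have h0 : |biphi x y v * r| ≤ ((1/(2*π*Real.sqrt (1-ρ^2))) * Real.exp (-(x^2+y^2)/4)) *
      (3*(1+x^2)*(1+y^2) / (1-ρ^2)^2) := by
    rw [abs_mul, abs_of_nonneg (biphi_nonneg x y v)]
    exact mul_le_mul hb hr (abs_nonneg _) (by positivity)
  refine h0.trans ?_
  calc (1/(2*π*Real.sqrt (1-ρ^2))) * Real.exp (-(x^2+y^2)/4) * (3*(1+x^2)*(1+y^2) / (1-ρ^2)^2)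
      = (1/(2*π*Real.sqrt (1-ρ^2))) * (3/(1-ρ^2)^2) *
        (Real.exp (-(x^2+y^2)/4) * ((1+x^2)*(1+y^2))) := by ring
    _ ≤ (1/(2*π*Real.sqrt (1-ρ^2))) * (3/(1-ρ^2)^2) *
        (64 * (Real.exp (-x^2/8) * Real.exp (-y^2/8))) := by
        exact mul_le_mul_of_nonneg_left (exp_key x y) (by positivity)
    _ = KK ρ * (Real.exp (-x^2/8) * Real.exp (-y^2/8)) := by rw [KK]; ring

lemma abs_D2_le {ρ v : ℝ} (hρ1 : ρ < 1) (hv0 : 0 ≤ v) (hvρ : v ≤ ρ) (x y : ℝ) :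
    |D2 x y v| ≤ KK ρ * (Real.exp (-x^2/8) * Real.exp (-y^2/8)) := by
  have hv1 : v < 1 := lt_of_le_of_lt hvρ hρ1
  have hSv : (0:ℝ) < 1 - v^2 := by nlinarith
  have hSρ : (0:ℝ) < 1 - ρ^2 := by nlinarith
  refine master hρ1 hv0 hvρ x y _ ?_
  rw [abs_div, abs_of_pos (show (0:ℝ) < (1 - v^2)^2 by positivity)]
  have hden : (1-ρ^2)^2 ≤ (1-v^2)^2 := by
    have h : 1 - ρ^2 ≤ 1 - v^2 := by nlinarith
    exact pow_le_pow_left₀ hSρ.le h 2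
  apply div_le_div₀ (by positivity) ?_ (by positivity) hden
  rw [abs_le]
  constructor <;>
    nlinarith [sq_nonneg (x-y), sq_nonneg (x+y), sq_nonneg (x*y), sq_nonneg v,
      mul_nonneg hv0 (sq_nonneg (x-y)), mul_nonneg hv0 (sq_nonneg (x+y)),
      sq_nonneg (x*y - 1), sq_nonneg (x*y + 1),
      mul_nonneg (mul_nonneg (sq_nonneg x) (sq_nonneg y)) hv0]

lemma abs_g1_le {ρ v : ℝ} (hρ1 : ρ < 1) (hv0 : 0 ≤ v) (hvρ : v ≤ ρ) (x y : ℝ) :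
    |g1 x y v| ≤ KK ρ * (Real.exp (-x^2/8) * Real.exp (-y^2/8)) := by
  have hv1 : v < 1 := lt_of_le_of_lt hvρ hρ1
  have hSv : (0:ℝ) < 1 - v^2 := by nlinarith
  have hSρ : (0:ℝ) < 1 - ρ^2 := by nlinarith
  refine master hρ1 hv0 hvρ x y _ ?_
  rw [abs_div, abs_of_pos hSv]
  have hden : (1-ρ^2)^2 ≤ (1-v^2) := by nlinarith
  apply div_le_div₀ (by positivity) ?_ (by positivity) hden
  rw [abs_le]
  constructor <;>
    nlinarith [sq_nonneg (y-1), sq_nonneg (y+1), sq_nonneg (x-1), sq_nonneg (x+1),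
      mul_nonneg hv0 (sq_nonneg (y-1)), mul_nonneg hv0 (sq_nonneg (y+1)),
      mul_nonneg (mul_nonneg (sq_nonneg x) (sq_nonneg y)) hv0, sq_nonneg x, sq_nonneg y,
      mul_nonneg (sub_nonneg.2 hv1.le) (add_nonneg (sq_nonneg y) (by norm_num : (0:ℝ) ≤ 1))]

lemma abs_biphi_le {ρ v : ℝ} (hρ1 : ρ < 1) (hv0 : 0 ≤ v) (hvρ : v ≤ ρ) (x y : ℝ) :
    |biphi x y v| ≤ KK ρ * (Real.exp (-x^2/8) * Real.exp (-y^2/8)) := by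
  have hSρ : (0:ℝ) < 1 - ρ^2 := by nlinarith [hv0.trans hvρ]
  have h := master hρ1 hv0 hvρ x y 1 ?_
  · simpa using h
  · rw [abs_one, le_div_iff₀ (by positivity)]
    have h1 : (1:ℝ) - ρ^2 ≤ 1 := by nlinarith [hv0.trans hvρ]
    have h2 : ((1:ℝ) - ρ^2)^2 ≤ 1 := by nlinarith
    nlinarith [mul_nonneg (sq_nonneg x) (sq_nonneg y), sq_nonneg x, sq_nonneg y]

lemma cont_biphi_xy (v : ℝ) : Continuous (fun z : ℝ×ℝ => biphi z.1 z.2 v) := by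
  unfold biphi; fun_prop

lemma cont_D2_xy (v : ℝ) : Continuous (fun z : ℝ×ℝ => D2 z.1 z.2 v) := by
  unfold D2 biphi; fun_prop

lemma cont_D2_y (x v : ℝ) : Continuous (fun y => D2 x y v) := by
  unfold D2 biphi; fun_prop

lemma meas_D2_triple : Measurable (fun w : (ℝ×ℝ)×ℝ => D2 w.1.1 w.1.2 w.2) := by
  unfold D2 biphi; fun_prop

lemma int_exp8 : Integrable (fun x : ℝ => Real.exp (-x^2/8)) volume := by
  have h := integrable_exp_neg_mul_sq (show (0:ℝ) < 1/8 by norm_num)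
  have heq : (fun x : ℝ => Real.exp (-x^2/8)) = fun x => Real.exp (-(1/8:ℝ)*x^2) := by
    funext x; congr 1; ring
  rw [heq]; exact h

lemma tendsto_exp8 : Tendsto (fun y : ℝ => Real.exp (-y^2/8)) atTop (nhds 0) := by
  have h1 : Tendsto (fun y : ℝ => y^2/8) atTop atTop :=
    (tendsto_pow_atTop two_ne_zero).atTop_div_const (by norm_num)
  have h2 : Tendsto (fun y : ℝ => -y^2/8) atTop atBot := by
    have := tendsto_neg_atBot_iff.mpr h1
    simpa [neg_div] using this
  exact Real.tendsto_exp_atBot.comp h2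

lemma biphi_zero (x y : ℝ) : biphi x y 0 = gphi x * gphi y := by
  have h2π : Real.sqrt (2*π) * Real.sqrt (2*π) = 2*π := Real.mul_self_sqrt (by positivity)
  simp only [biphi, gphi]
  rw [show (1:ℝ) - 0^2 = 1 by norm_num, Real.sqrt_one]
  rw [show (-(x^2+y^2-2*0*x*y)/(2*1) : ℝ) = -x^2/2 + -y^2/2 by ring, Real.exp_add]
  have hkey : (1/Real.sqrt (2*π)) * (1/Real.sqrt (2*π)) = 1/(2*π*1) := by
    rw [div_mul_div_comm, one_mul, h2π, mul_one]
  rw [← hkey]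
  ring

lemma biphi_diag (u v : ℝ) (hv2 : v^2 < 1) :
    biphi u u v = (1/(2*π)) * (Real.exp (-u^2/(1+v)) * (1 - v^2) ^ (-(1:ℝ)/2)) := by
  have hS : (0:ℝ) < 1 - v^2 := by nlinarith
  have h1v : (0:ℝ) < 1 + v := by nlinarith
  have hsq : (0:ℝ) < Real.sqrt (1 - v^2) := Real.sqrt_pos.2 hS
  rw [biphi]
  rw [show (-(1:ℝ)/2 : ℝ) = -(1/2) by norm_num, Real.rpow_neg hS.le, ← Real.sqrt_eq_rpow]
  have hexp : (-(u ^ 2 + u ^ 2 - 2 * v * u * u) / (2 * (1 - v ^ 2))) = -u^2/(1+v) := by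
    rw [div_eq_div_iff (by positivity) (by positivity)]
    ring
  rw [hexp]
  have hπ : (0:ℝ) < π := Real.pi_pos
  field_simp

theorem stmt3 (u ρ : ℝ) (hρ : ρ ∈ Set.Ico (0:ℝ) 1) :
    ∫ x in Set.Ici u, ∫ y in Set.Ici u, biphi x y ρ
      = (∫ y in Set.Ici u, gphi y) ^ 2 +
        (1 / (2 * π)) * ∫ v in (0:ℝ)..ρ, Real.exp (-u ^ 2 / (1 + v)) * (1 - v ^ 2) ^ (-(1:ℝ) / 2) := by
  obtain ⟨hρ0, hρ1⟩ := hρ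
  have hSρ : (0:ℝ) < 1 - ρ^2 := by nlinarith
  have hexp8 := int_exp8
  -- basic integrability on the product
  have hBint : Integrable (fun z : ℝ×ℝ => KK ρ * (Real.exp (-z.1^2/8) * Real.exp (-z.2^2/8)))
      ((volume.restrict (Set.Ici u)).prod (volume.restrict (Set.Ici u))) :=
    (Integrable.mul_prod hexp8.integrableOn hexp8.integrableOn).const_mul _
  have hbint : ∀ v, 0 ≤ v → v ≤ ρ → Integrable (fun z : ℝ×ℝ => biphi z.1 z.2 v)
      ((volume.restrict (Set.Ici u)).prod (volume.restrict (Set.Ici u))) := by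
    intro v h0 h1
    refine hBint.mono' ((cont_biphi_xy v).aestronglyMeasurable) (ae_of_all _ fun z => ?_)
    rw [Real.norm_eq_abs]
    exact abs_biphi_le hρ1 h0 h1 z.1 z.2
  have hD2int : ∀ v, 0 ≤ v → v ≤ ρ → Integrable (fun z : ℝ×ℝ => D2 z.1 z.2 v)
      ((volume.restrict (Set.Ici u)).prod (volume.restrict (Set.Ici u))) := by
    intro v h0 h1
    refine hBint.mono' ((cont_D2_xy v).aestronglyMeasurable) (ae_of_all _ fun z => ?_)
    rw [Real.norm_eq_abs]
    exact abs_D2_le hρ1 h0 h1 z.1 z.2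
  -- a.e. membership of the last coordinate
  have hνIoc : ∀ᵐ w ∂(((volume.restrict (Set.Ici u)).prod (volume.restrict (Set.Ici u))).prod
      (volume.restrict (Set.Ioc (0:ℝ) ρ))), w.2 ∈ Set.Ioc (0:ℝ) ρ := by
    rw [ae_iff]
    refine measure_mono_null (t := Set.univ ×ˢ (Set.Ioc (0:ℝ) ρ)ᶜ) (fun w hw => ?_) ?_
    · exact Set.mem_prod.2 ⟨Set.mem_univ _, hw⟩
    · rw [Measure.prod_prod]
      have h0 : (volume.restrict (Set.Ioc (0:ℝ) ρ)) ((Set.Ioc (0:ℝ) ρ)ᶜ) = 0 := by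
        rw [Measure.restrict_apply (measurableSet_Ioc.compl)]
        simp
      rw [h0, mul_zero]
  -- triple integrability
  have hTriple : Integrable (fun w : (ℝ×ℝ)×ℝ => D2 w.1.1 w.1.2 w.2)
      (((volume.restrict (Set.Ici u)).prod (volume.restrict (Set.Ici u))).prod
        (volume.restrict (Set.Ioc (0:ℝ) ρ))) := by
    have hBν : Integrable (fun w : (ℝ×ℝ)×ℝ =>
        (KK ρ * (Real.exp (-w.1.1^2/8) * Real.exp (-w.1.2^2/8))) * 1)
        (((volume.restrict (Set.Ici u)).prod (volume.restrict (Set.Ici u))).prod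
          (volume.restrict (Set.Ioc (0:ℝ) ρ))) := by
      have hone : Integrable (fun _ : ℝ => (1:ℝ)) (volume.restrict (Set.Ioc (0:ℝ) ρ)) := by
        rw [integrable_const_iff]
        right
        exact ⟨by rw [Measure.restrict_apply_univ]; exact measure_Ioc_lt_top⟩
      exact Integrable.mul_prod hBint hone
    refine hBν.mono' meas_D2_triple.aestronglyMeasurable ?_
    filter_upwards [hνIoc] with w hw
    rw [Real.norm_eq_abs, mul_one]
    exact abs_D2_le hρ1 hw.1.le hw.2 _ _
  -- pointwise FTC in v
  have hFTC_v : ∀ x y : ℝ, biphi x y ρ - biphi x y 0 = ∫ v in Set.Ioc (0:ℝ) ρ, D2 x y v := by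
    intro x y
    rw [← intervalIntegral.integral_of_le hρ0]
    have hd : ∀ v ∈ Set.uIcc (0:ℝ) ρ, HasDerivAt (fun v => biphi x y v) (D2 x y v) v := by
      intro v hv
      rw [Set.uIcc_of_le hρ0] at hv
      exact hasDerivAt_biphi_v x y v (by nlinarith [hv.1, hv.2])
    have hi : IntervalIntegrable (fun v => D2 x y v) volume 0 ρ := by
      apply ContinuousOn.intervalIntegrable
      intro v hv
      rw [Set.uIcc_of_le hρ0] at hv
      have hv2 : v^2 < 1 := by nlinarith [hv.1, hv.2]
      have hne : ((1:ℝ) - v^2)^2 ≠ 0 := by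
        have : (0:ℝ) < 1 - v^2 := by nlinarith
        positivity
      have : ContinuousAt (fun v => D2 x y v) v := by
        unfold D2
        exact ((hasDerivAt_biphi_v x y v hv2).continuousAt).mul
          (ContinuousAt.div (by fun_prop) (by fun_prop) hne)
      exact this.continuousWithinAt
    rw [intervalIntegral.integral_eq_sub_of_hasDerivAt hd hi]
  -- key: ∫∫ D2 = biphi u u v
  have key : ∀ v, 0 < v → v ≤ ρ →
      (∫ z : ℝ×ℝ, D2 z.1 z.2 v
        ∂((volume.restrict (Set.Ici u)).prod (volume.restrict (Set.Ici u)))) = biphi u u v := by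
    intro v hv0 hvρ
    have hv0' : 0 ≤ v := hv0.le
    have hv1 : v < 1 := lt_of_le_of_lt hvρ hρ1
    have hv2 : v^2 < 1 := by nlinarith
    have hS : (0:ℝ) < 1 - v^2 := by nlinarith
    have hinner : ∀ x : ℝ, (∫ y in Set.Ici u, D2 x y v) = biphi x u v * ((x - v*u)/(1-v^2)) := by
      intro x
      rw [integral_Ici_eq_integral_Ioi]
      have hcont : ContinuousWithinAt (fun y => g1 x y v) (Set.Ici u) u :=
        (hasDerivAt_g1_y x v hv2 u).continuousAt.continuousWithinAt
      have hder : ∀ y ∈ Set.Ioi u, HasDerivAt (fun y => g1 x y v) (D2 x y v) y :=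
        fun y _ => hasDerivAt_g1_y x v hv2 y
      have hint : IntegrableOn (fun y => D2 x y v) (Set.Ioi u) volume := by
        have hb : Integrable (fun y : ℝ => KK ρ * Real.exp (-x^2/8) * Real.exp (-y^2/8))
          volume := hexp8.const_mul _
        refine (hb.integrableOn).mono' ((cont_D2_y x v).aestronglyMeasurable.restrict)
          (ae_of_all _ fun y => ?_)
        rw [Real.norm_eq_abs]
        calc |D2 x y v| ≤ KK ρ * (Real.exp (-x^2/8) * Real.exp (-y^2/8)) :=
              abs_D2_le hρ1 hv0' hvρ x y
          _ = KK ρ * Real.exp (-x^2/8) * Real.exp (-y^2/8) := by ring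
      have htend : Tendsto (fun y => g1 x y v) atTop (nhds 0) := by
        refine squeeze_zero_norm (a := fun y : ℝ => KK ρ * Real.exp (-x^2/8) * Real.exp (-y^2/8))
          (fun y => ?_) ?_
        · rw [Real.norm_eq_abs]
          calc |g1 x y v| ≤ KK ρ * (Real.exp (-x^2/8) * Real.exp (-y^2/8)) :=
                abs_g1_le hρ1 hv0' hvρ x y
            _ = KK ρ * Real.exp (-x^2/8) * Real.exp (-y^2/8) := by ring
        · have := tendsto_exp8.const_mul (KK ρ * Real.exp (-x^2/8))
          simpa using this
      have hres := integral_Ioi_of_hasDerivAt_of_tendsto hcont hder hint htend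
      rw [hres, g1]
      ring
    have hped : Integrable (Function.uncurry fun x y => D2 x y v)
        ((volume.restrict (Set.Ici u)).prod (volume.restrict (Set.Ici u))) := hD2int v hv0' hvρ
    rw [← MeasureTheory.integral_integral hped]
    rw [integral_congr_ae (Eventually.of_forall hinner)]
    -- outer FTC
    rw [integral_Ici_eq_integral_Ioi]
    have hcont : ContinuousWithinAt (fun x => -(biphi x u v)) (Set.Ici u) u :=
      ((hasDerivAt_biphi_x u v hv2 u).neg.continuousAt).continuousWithinAt
    have hder : ∀ x ∈ Set.Ioi u,
        HasDerivAt (fun x => -(biphi x u v)) (biphi x u v * ((x - v*u)/(1-v^2))) x := by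
      intro x _
      have h := (hasDerivAt_biphi_x u v hv2 x).neg
      exact h.congr_deriv (by ring)
    have hint : IntegrableOn (fun x => biphi x u v * ((x - v*u)/(1-v^2))) (Set.Ioi u) volume := by
      have hb : Integrable (fun x : ℝ => KK ρ * Real.exp (-u^2/8) * Real.exp (-x^2/8))
        volume := hexp8.const_mul _
      have hcm : Continuous (fun x => biphi x u v * ((x - v*u)/(1-v^2))) := by
        have h1 : Continuous (fun x => biphi x u v) := by unfold biphi; fun_prop
        exact h1.mul (by fun_prop)
      refine (hb.integrableOn).mono' (hcm.aestronglyMeasurable.restrict)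
        (ae_of_all _ fun x => ?_)
      rw [Real.norm_eq_abs]
      have hg : biphi x u v * ((x - v*u)/(1-v^2)) = -(g1 x u v) := by rw [g1]; ring
      rw [hg, abs_neg]
      calc |g1 x u v| ≤ KK ρ * (Real.exp (-x^2/8) * Real.exp (-u^2/8)) :=
            abs_g1_le hρ1 hv0' hvρ x u
        _ = KK ρ * Real.exp (-u^2/8) * Real.exp (-x^2/8) := by ring
    have htend : Tendsto (fun x => -(biphi x u v)) atTop (nhds 0) := by
      refine squeeze_zero_norm (a := fun x : ℝ => KK ρ * Real.exp (-u^2/8) * Real.exp (-x^2/8))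
        (fun x => ?_) ?_
      · rw [Real.norm_eq_abs, abs_neg]
        calc |biphi x u v| ≤ KK ρ * (Real.exp (-x^2/8) * Real.exp (-u^2/8)) :=
              abs_biphi_le hρ1 hv0' hvρ x u
          _ = KK ρ * Real.exp (-u^2/8) * Real.exp (-x^2/8) := by ring
      · have := tendsto_exp8.const_mul (KK ρ * Real.exp (-u^2/8))
        simpa using this
    have hres := integral_Ioi_of_hasDerivAt_of_tendsto hcont hder hint htend
    rw [hres]
    simp
  -- assemble
  have hIρ : Integrable (Function.uncurry fun x y => biphi x y ρ)
      ((volume.restrict (Set.Ici u)).prod (volume.restrict (Set.Ici u))) := hbint ρ hρ0 le_rfl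
  have hI0 : Integrable (Function.uncurry fun x y => biphi x y 0)
      ((volume.restrict (Set.Ici u)).prod (volume.restrict (Set.Ici u))) := hbint 0 le_rfl hρ0
  rw [MeasureTheory.integral_integral hIρ]
  have hsplit : ∫ z : ℝ×ℝ, biphi z.1 z.2 ρ
        ∂((volume.restrict (Set.Ici u)).prod (volume.restrict (Set.Ici u)))
      = (∫ z : ℝ×ℝ, biphi z.1 z.2 0
          ∂((volume.restrict (Set.Ici u)).prod (volume.restrict (Set.Ici u))))
        + ∫ z : ℝ×ℝ, (biphi z.1 z.2 ρ - biphi z.1 z.2 0)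
          ∂((volume.restrict (Set.Ici u)).prod (volume.restrict (Set.Ici u))) := by
    rw [integral_sub (hbint ρ hρ0 le_rfl) (hbint 0 le_rfl hρ0)]
    ring
  rw [hsplit]
  have hA : (∫ z : ℝ×ℝ, biphi z.1 z.2 0
      ∂((volume.restrict (Set.Ici u)).prod (volume.restrict (Set.Ici u))))
      = (∫ y in Set.Ici u, gphi y) ^ 2 := by
    rw [← MeasureTheory.integral_integral hI0]
    have h1 : ∀ x : ℝ, (∫ y in Set.Ici u, biphi x y 0) = gphi x * ∫ y in Set.Ici u, gphi y := by
      intro x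
      rw [show (fun y => biphi x y 0) = (fun y => gphi x * gphi y) from
        funext fun y => biphi_zero x y]
      exact integral_const_mul _ _
    rw [integral_congr_ae (Eventually.of_forall h1), integral_mul_const]
    ring
  have hB : (∫ z : ℝ×ℝ, (biphi z.1 z.2 ρ - biphi z.1 z.2 0)
      ∂((volume.restrict (Set.Ici u)).prod (volume.restrict (Set.Ici u))))
      = ∫ v in Set.Ioc (0:ℝ) ρ, biphi u u v := by
    have h1 : (∫ z : ℝ×ℝ, (biphi z.1 z.2 ρ - biphi z.1 z.2 0)
        ∂((volume.restrict (Set.Ici u)).prod (volume.restrict (Set.Ici u))))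
        = ∫ z : ℝ×ℝ, (∫ v in Set.Ioc (0:ℝ) ρ, D2 z.1 z.2 v)
          ∂((volume.restrict (Set.Ici u)).prod (volume.restrict (Set.Ici u))) :=
      integral_congr_ae (Eventually.of_forall fun z => hFTC_v z.1 z.2)
    rw [h1]
    rw [MeasureTheory.integral_integral_swap hTriple]
    refine integral_congr_ae ?_
    filter_upwards [ae_restrict_mem measurableSet_Ioc] with v hv
    exact key v hv.1 hv.2
  rw [hA, hB]
  congr 1
  rw [intervalIntegral.integral_of_le hρ0, ← integral_const_mul]
  refine setIntegral_congr_fun measurableSet_Ioc fun v hv => ?_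
  have hv2 : v^2 < 1 := by nlinarith [hv.1, hv.2]
  exact biphi_diag u v hv2
end

section
/- Let C(z,τ) = (σ²/(1 + a τ^{2α})^{βd/2}) · (1 + c̃ (z²/(1 + a τ^{2α})^β)^{γ̃})^{−ν} with a, c̃, σ² > 0, 0 < α ≤ 1, 0 < β ≤ 1, 0 < γ̃ ≤ 1, ν > 0. If γ > αβ and γ̃ν < 1/(2(γ − αβ)), then for every δ₁ ∈ (0, 1 − 2νγ̃(γ − αβ)) and δ₂ ∈ (0, 1 − αβ/γ): lim_{T→∞} T^{−δ₁ − γdδ₂} ∫₀^T (1 − τ/T) ∫₀^{2T^γ} z^{d-1} C(z,τ) I_{1-(z/(2T^γ))²}((d+1)/2, 1/2) dz dτ = ∞. -/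
open Real Filter MeasureTheory Set intervalIntegral

lemma ribAux_intable {p : ℝ} (hp : 1 ≤ p) :
    IntervalIntegrable (fun t : ℝ => t ^ (p - 1) * (1 - t) ^ ((1:ℝ)/2 - 1)) volume 0 1 := by
  have h2 : IntervalIntegrable (fun t : ℝ => (1 - t) ^ ((1:ℝ)/2 - 1)) volume 0 1 := by
    have := (intervalIntegrable_rpow' (a := 0) (b := 1) (r := (1:ℝ)/2 - 1) (by norm_num)).comp_sub_left 1
    simpa using this.symm
  exact h2.continuousOn_mul
    ((Real.continuous_rpow_const (by linarith)).continuousOn)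

lemma ribAux_G_pos {p : ℝ} (hp : 1 ≤ p) :
    0 < Real.Gamma (p + 1/2) / (Real.Gamma p * Real.Gamma (1/2)) :=
  div_pos (Real.Gamma_pos_of_pos (by linarith))
    (mul_pos (Real.Gamma_pos_of_pos (by linarith)) (Real.Gamma_pos_of_pos (by norm_num)))

lemma ribAux_mono {p : ℝ} (hp : 1 ≤ p) {μ₁ μ₂ : ℝ} (h0 : 0 ≤ μ₁) (h12 : μ₁ ≤ μ₂)
    (h21 : μ₂ ≤ 1) : regIncBeta μ₁ p (1/2) ≤ regIncBeta μ₂ p (1/2) := by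
  unfold regIncBeta
  refine mul_le_mul_of_nonneg_left ?_ (ribAux_G_pos hp).le
  refine intervalIntegral.integral_mono_interval le_rfl h0 h12 ?_ ?_
  · refine (ae_restrict_iff' measurableSet_Ioc).2 (Filter.Eventually.of_forall fun t ht => ?_)
    exact mul_nonneg (Real.rpow_nonneg ht.1.le _)
      (Real.rpow_nonneg (by linarith [ht.2]) _)
  · exact (ribAux_intable hp).mono_set (by
      rw [uIcc_of_le (h0.trans h12), uIcc_of_le (by norm_num : (0:ℝ) ≤ 1)]
      exact Icc_subset_Icc le_rfl h21)

lemma ribAux_nonneg {p : ℝ} (hp : 1 ≤ p) {μ : ℝ} (h0 : 0 ≤ μ) (h1 : μ ≤ 1) :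
    0 ≤ regIncBeta μ p (1/2) := by
  unfold regIncBeta
  refine mul_nonneg (ribAux_G_pos hp).le ?_
  refine intervalIntegral.integral_nonneg h0 fun t ht => ?_
  exact mul_nonneg (Real.rpow_nonneg ht.1 _) (Real.rpow_nonneg (by linarith [ht.2]) _)

lemma ribAux_pos {p : ℝ} (hp : 1 ≤ p) : 0 < regIncBeta (3/4) p (1/2) := by
  unfold regIncBeta
  refine mul_pos (ribAux_G_pos hp) ?_
  refine intervalIntegral.integral_pos (by norm_num) ?_ ?_ ⟨1/2, by norm_num, ?_⟩
  · refine ((Real.continuous_rpow_const (by linarith)).continuousOn).mul ?_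
    refine (continuousOn_const.sub continuousOn_id).rpow_const fun t ht => Or.inl ?_
    have := ht.2; intro hcon; simp at hcon; linarith
  · intro t ht
    exact mul_nonneg (Real.rpow_nonneg ht.1.le _) (Real.rpow_nonneg (by linarith [ht.2]) _)
  · have : (0:ℝ) < 1 - 1/2 := by norm_num
    exact mul_pos (Real.rpow_pos_of_pos (by norm_num) _) (Real.rpow_pos_of_pos this _)

lemma ribAux_cont {p : ℝ} (hp : 1 ≤ p) :
    ContinuousOn (fun μ => regIncBeta μ p (1/2)) (Icc 0 1) := by
  unfold regIncBeta
  refine continuousOn_const.mul ?_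
  have h := continuousOn_primitive_interval (a := 0) (b := 1)
    (f := fun t : ℝ => t ^ (p - 1) * (1 - t) ^ ((1:ℝ)/2 - 1)) (μ := volume) ?_
  · simpa [uIcc_of_le (by norm_num : (0:ℝ) ≤ 1)] using h
  · rw [uIcc_of_le (by norm_num : (0:ℝ) ≤ 1),
      ← intervalIntegrable_iff_integrableOn_Icc_of_le (by norm_num)]
    exact ribAux_intable hp

set_option maxHeartbeats 2000000 in
lemma stmt15_key (d : ℕ) (hd : 1 ≤ d) (σ2 a c' α β γ' ν γ : ℝ)
    (hσ2 : 0 < σ2) (ha : 0 < a) (hc' : 0 < c')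
    (hα : 0 < α) (hβ : 0 < β) (hγ' : 0 < γ') (hν : 0 < ν)
    (hγαβ : α * β < γ) (T : ℝ) (hT1 : 1 ≤ T) :
    (1/32) * (1/2:ℝ)^(d-1) * σ2 * (1+a) ^ (-(β*(d:ℝ)/2)) *
        (1 + c' * ((2:ℝ) ^ (2*α*β) / a ^ β) ^ γ') ^ (-ν) *
        regIncBeta (3/4) (((d:ℝ) + 1) / 2) (1/2) *
        T ^ (1 + γ * (d:ℝ) - α * β * (d:ℝ) - 2 * γ' * (γ - α * β) * ν) ≤
      ∫ τ in (0:ℝ)..T, (1 - τ / T) *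
        ∫ z in (0:ℝ)..(2 * T ^ γ), z ^ (d - 1) * (σ2 / (1 + a * τ ^ (2 * α)) ^ (β * (d:ℝ) / 2) *
          (1 + c' * (z ^ 2 / (1 + a * τ ^ (2 * α)) ^ β) ^ γ') ^ (-ν)) *
          regIncBeta (1 - (z / (2 * T ^ γ)) ^ 2) (((d:ℝ) + 1) / 2) (1 / 2) := by
  have hd1 : (1:ℝ) ≤ (d:ℝ) := by exact_mod_cast hd
  have hd0 : (0:ℝ) < (d:ℝ) := by linarith
  have hαβ : 0 < α * β := mul_pos hα hβ
  have hγpos : 0 < γ := hαβ.trans hγαβ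
  have hγαβ' : 0 < γ - α * β := by linarith
  have hp1 : (1:ℝ) ≤ ((d : ℝ) + 1) / 2 := by linarith
  have hB : 0 < regIncBeta (3/4) (((d : ℝ) + 1) / 2) (1/2) := ribAux_pos hp1
  set B : ℝ := regIncBeta (3/4) (((d : ℝ) + 1) / 2) (1/2) with hBdef
  set c₀ : ℝ := (2:ℝ) ^ (2*α*β) / a ^ β with hc₀def
  have hc₀ : 0 < c₀ := div_pos (Real.rpow_pos_of_pos two_pos _) (Real.rpow_pos_of_pos ha _)
  set K : ℝ := 1 + c' * c₀ ^ γ' with hKdef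
  have hK : 0 < K := by
    have := Real.rpow_nonneg hc₀.le γ'; nlinarith
  have hT0 : (0:ℝ) < T := lt_of_lt_of_le one_pos hT1
  have hR0 : (0:ℝ) < T ^ γ := Real.rpow_pos_of_pos hT0 γ
  have hR1 : (1:ℝ) ≤ T ^ γ := Real.one_le_rpow hT1 hγpos.le
  have h2R : (0:ℝ) ≤ 2 * T ^ γ := by positivity
  have hDpos : ∀ τ : ℝ, 0 ≤ τ → (0:ℝ) < 1 + a * τ ^ (2 * α) := fun τ hτ => by
    have := Real.rpow_nonneg hτ (2 * α); nlinarith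
  -- joint continuity
  have gcont : ContinuousOn (fun q : ℝ × ℝ =>
      q.2 ^ (d - 1) * (σ2 / (1 + a * q.1 ^ (2 * α)) ^ (β * (d:ℝ) / 2) *
        (1 + c' * (q.2 ^ 2 / (1 + a * q.1 ^ (2 * α)) ^ β) ^ γ') ^ (-ν)) *
        regIncBeta (1 - (q.2 / (2 * T ^ γ)) ^ 2) (((d:ℝ) + 1) / 2) (1 / 2))
      ((Icc 0 T) ×ˢ (Icc 0 (2 * T ^ γ))) := by
    have cD : Continuous fun q : ℝ × ℝ => 1 + a * q.1 ^ (2 * α) :=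
      continuous_const.add (continuous_const.mul
        ((Real.continuous_rpow_const (by positivity)).comp continuous_fst))
    have hDpos' : ∀ q ∈ (Icc (0:ℝ) T) ×ˢ (Icc (0:ℝ) (2 * T ^ γ)),
        (0:ℝ) < 1 + a * q.1 ^ (2 * α) := fun q hq => hDpos q.1 hq.1.1
    have c2 : ContinuousOn (fun q : ℝ × ℝ =>
        σ2 / (1 + a * q.1 ^ (2 * α)) ^ (β * (d:ℝ) / 2))
        ((Icc (0:ℝ) T) ×ˢ (Icc (0:ℝ) (2 * T ^ γ))) := by
      refine continuousOn_const.div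
        (((Real.continuous_rpow_const (by positivity)).comp cD).continuousOn) ?_
      exact fun q hq => (Real.rpow_pos_of_pos (hDpos' q hq) _).ne'
    have cx : ContinuousOn (fun q : ℝ × ℝ =>
        q.2 ^ 2 / (1 + a * q.1 ^ (2 * α)) ^ β)
        ((Icc (0:ℝ) T) ×ˢ (Icc (0:ℝ) (2 * T ^ γ))) := by
      refine (continuous_snd.pow 2).continuousOn.div
        (((Real.continuous_rpow_const hβ.le).comp cD).continuousOn) ?_
      exact fun q hq => (Real.rpow_pos_of_pos (hDpos' q hq) _).ne'
    have cxγ : ContinuousOn (fun q : ℝ × ℝ =>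
        (q.2 ^ 2 / (1 + a * q.1 ^ (2 * α)) ^ β) ^ γ')
        ((Icc (0:ℝ) T) ×ˢ (Icc (0:ℝ) (2 * T ^ γ))) :=
      (Real.continuous_rpow_const hγ'.le).comp_continuousOn cx
    have c3 : ContinuousOn (fun q : ℝ × ℝ =>
        (1 + c' * (q.2 ^ 2 / (1 + a * q.1 ^ (2 * α)) ^ β) ^ γ') ^ (-ν))
        ((Icc (0:ℝ) T) ×ˢ (Icc (0:ℝ) (2 * T ^ γ))) := by
      refine (continuousOn_const.add (continuousOn_const.mul cxγ)).rpow_const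
        fun q hq => Or.inl ?_
      have hx0 : (0:ℝ) ≤ q.2 ^ 2 / (1 + a * q.1 ^ (2 * α)) ^ β :=
        div_nonneg (sq_nonneg _) (Real.rpow_pos_of_pos (hDpos' q hq) _).le
      have := Real.rpow_nonneg hx0 γ'
      show (1 + c' * (q.2 ^ 2 / (1 + a * q.1 ^ (2 * α)) ^ β) ^ γ') ≠ 0
      nlinarith
    have c4 : ContinuousOn (fun q : ℝ × ℝ =>
        regIncBeta (1 - (q.2 / (2 * T ^ γ)) ^ 2) (((d:ℝ) + 1) / 2) (1 / 2))
        ((Icc (0:ℝ) T) ×ˢ (Icc (0:ℝ) (2 * T ^ γ))) := by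
      refine (ribAux_cont hp1).comp
        (continuous_const.sub ((continuous_snd.div_const _).pow 2)).continuousOn ?_
      rintro ⟨τ, z⟩ ⟨-, hz⟩
      have h0 : 0 ≤ z / (2 * T ^ γ) := div_nonneg hz.1 h2R
      have h1 : z / (2 * T ^ γ) ≤ 1 := div_le_one_of_le₀ hz.2 h2R
      constructor
      · nlinarith
      · nlinarith [sq_nonneg (z / (2 * T ^ γ))]
    exact ((continuous_snd.pow (d-1)).continuousOn.mul (c2.mul c3)).mul c4
  have gz : ∀ τ ∈ Icc (0:ℝ) T, ContinuousOn (fun z : ℝ =>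
      z ^ (d - 1) * (σ2 / (1 + a * τ ^ (2 * α)) ^ (β * (d:ℝ) / 2) *
        (1 + c' * (z ^ 2 / (1 + a * τ ^ (2 * α)) ^ β) ^ γ') ^ (-ν)) *
        regIncBeta (1 - (z / (2 * T ^ γ)) ^ 2) (((d:ℝ) + 1) / 2) (1 / 2))
      (Icc 0 (2 * T ^ γ)) := by
    intro τ hτ
    exact gcont.comp (Continuous.continuousOn (by fun_prop))
      (fun z hz => Set.mk_mem_prod hτ hz)
  have gint : ∀ τ ∈ Icc (0:ℝ) T, IntervalIntegrable (fun z : ℝ =>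
      z ^ (d - 1) * (σ2 / (1 + a * τ ^ (2 * α)) ^ (β * (d:ℝ) / 2) *
        (1 + c' * (z ^ 2 / (1 + a * τ ^ (2 * α)) ^ β) ^ γ') ^ (-ν)) *
        regIncBeta (1 - (z / (2 * T ^ γ)) ^ 2) (((d:ℝ) + 1) / 2) (1 / 2))
      volume 0 (2 * T ^ γ) := by
    intro τ hτ
    exact ContinuousOn.intervalIntegrable (by rw [uIcc_of_le h2R]; exact gz τ hτ)
  have hμmem : ∀ z ∈ Icc (0:ℝ) (2 * T ^ γ),
      0 ≤ 1 - (z / (2 * T ^ γ)) ^ 2 ∧ 1 - (z / (2 * T ^ γ)) ^ 2 ≤ 1 := by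
    intro z hz
    have h0 : 0 ≤ z / (2 * T ^ γ) := div_nonneg hz.1 h2R
    have h1 : z / (2 * T ^ γ) ≤ 1 := div_le_one_of_le₀ hz.2 h2R
    exact ⟨by nlinarith, by nlinarith [sq_nonneg (z / (2 * T ^ γ))]⟩
  have gnn : ∀ τ ∈ Icc (0:ℝ) T, ∀ z ∈ Icc (0:ℝ) (2 * T ^ γ),
      (0:ℝ) ≤ z ^ (d - 1) * (σ2 / (1 + a * τ ^ (2 * α)) ^ (β * (d:ℝ) / 2) *
        (1 + c' * (z ^ 2 / (1 + a * τ ^ (2 * α)) ^ β) ^ γ') ^ (-ν)) *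
        regIncBeta (1 - (z / (2 * T ^ γ)) ^ 2) (((d:ℝ) + 1) / 2) (1 / 2) := by
    intro τ hτ z hz
    have hD := hDpos τ hτ.1
    refine mul_nonneg (mul_nonneg (pow_nonneg hz.1 _) (mul_nonneg
      (div_nonneg hσ2.le (Real.rpow_nonneg hD.le _)) (Real.rpow_nonneg ?_ _)))
      (ribAux_nonneg hp1 (hμmem z hz).1 (hμmem z hz).2)
    have hx0 : (0:ℝ) ≤ z ^ 2 / (1 + a * τ ^ (2 * α)) ^ β :=
      div_nonneg (sq_nonneg _) (Real.rpow_pos_of_pos hD _).le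
    have := Real.rpow_nonneg hx0 γ'
    nlinarith
  have hMv0 : 0 ≤ regIncBeta 1 (((d:ℝ) + 1) / 2) (1/2) :=
    ribAux_nonneg hp1 zero_le_one le_rfl
  have gub : ∀ τ ∈ Icc (0:ℝ) T, ∀ z ∈ Icc (0:ℝ) (2 * T ^ γ),
      z ^ (d - 1) * (σ2 / (1 + a * τ ^ (2 * α)) ^ (β * (d:ℝ) / 2) *
        (1 + c' * (z ^ 2 / (1 + a * τ ^ (2 * α)) ^ β) ^ γ') ^ (-ν)) *
        regIncBeta (1 - (z / (2 * T ^ γ)) ^ 2) (((d:ℝ) + 1) / 2) (1 / 2) ≤ (2 * T ^ γ) ^ (d - 1) * σ2 * regIncBeta 1 (((d:ℝ) + 1) / 2) (1/2) := by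
    intro τ hτ z hz
    have hD := hDpos τ hτ.1
    have hx0 : (0:ℝ) ≤ z ^ 2 / (1 + a * τ ^ (2 * α)) ^ β :=
      div_nonneg (sq_nonneg _) (Real.rpow_pos_of_pos hD _).le
    have hxγ : (0:ℝ) ≤ (z ^ 2 / (1 + a * τ ^ (2 * α)) ^ β) ^ γ' := Real.rpow_nonneg hx0 _
    have h1 : z ^ (d - 1) ≤ (2 * T ^ γ) ^ (d - 1) := pow_le_pow_left₀ hz.1 hz.2 _
    have h2 : σ2 / (1 + a * τ ^ (2 * α)) ^ (β * (d:ℝ) / 2) *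
        (1 + c' * (z ^ 2 / (1 + a * τ ^ (2 * α)) ^ β) ^ γ') ^ (-ν) ≤ σ2 := by
      have h2a : σ2 / (1 + a * τ ^ (2 * α)) ^ (β * (d:ℝ) / 2) ≤ σ2 := by
        refine div_le_self hσ2.le (Real.one_le_rpow ?_ (by positivity))
        have := Real.rpow_nonneg hτ.1 (2 * α); nlinarith
      have h2b : (1 + c' * (z ^ 2 / (1 + a * τ ^ (2 * α)) ^ β) ^ γ') ^ (-ν) ≤ 1 :=
        Real.rpow_le_one_of_one_le_of_nonpos (by nlinarith) (by linarith)
      have h2c : 0 ≤ σ2 / (1 + a * τ ^ (2 * α)) ^ (β * (d:ℝ) / 2) :=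
        div_nonneg hσ2.le (Real.rpow_nonneg hD.le _)
      calc σ2 / (1 + a * τ ^ (2 * α)) ^ (β * (d:ℝ) / 2) *
          (1 + c' * (z ^ 2 / (1 + a * τ ^ (2 * α)) ^ β) ^ γ') ^ (-ν)
          ≤ σ2 / (1 + a * τ ^ (2 * α)) ^ (β * (d:ℝ) / 2) * 1 :=
            mul_le_mul_of_nonneg_left h2b h2c
        _ = σ2 / (1 + a * τ ^ (2 * α)) ^ (β * (d:ℝ) / 2) := mul_one _
        _ ≤ σ2 := h2a
    have h3 : regIncBeta (1 - (z / (2 * T ^ γ)) ^ 2) (((d:ℝ) + 1) / 2) (1 / 2) ≤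
        regIncBeta 1 (((d:ℝ) + 1) / 2) (1/2) :=
      ribAux_mono hp1 (hμmem z hz).1 (hμmem z hz).2 le_rfl
    have hnn2 : (0:ℝ) ≤ σ2 / (1 + a * τ ^ (2 * α)) ^ (β * (d:ℝ) / 2) *
        (1 + c' * (z ^ 2 / (1 + a * τ ^ (2 * α)) ^ β) ^ γ') ^ (-ν) :=
      mul_nonneg (div_nonneg hσ2.le (Real.rpow_nonneg hD.le _))
        (Real.rpow_nonneg (by nlinarith) _)
    refine mul_le_mul (mul_le_mul h1 h2 hnn2 (by positivity)) h3
      (ribAux_nonneg hp1 (hμmem z hz).1 (hμmem z hz).2) (by positivity)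
  have innernn : ∀ τ ∈ Icc (0:ℝ) T, (0:ℝ) ≤ ∫ z in (0:ℝ)..(2 * T ^ γ), z ^ (d - 1) * (σ2 / (1 + a * τ ^ (2 * α)) ^ (β * (d:ℝ) / 2) *
        (1 + c' * (z ^ 2 / (1 + a * τ ^ (2 * α)) ^ β) ^ γ') ^ (-ν)) *
        regIncBeta (1 - (z / (2 * T ^ γ)) ^ 2) (((d:ℝ) + 1) / 2) (1 / 2) :=
    fun τ hτ => intervalIntegral.integral_nonneg h2R (fun z hz => gnn τ hτ z hz)
  have innerle : ∀ τ ∈ Icc (0:ℝ) T, (∫ z in (0:ℝ)..(2 * T ^ γ), z ^ (d - 1) * (σ2 / (1 + a * τ ^ (2 * α)) ^ (β * (d:ℝ) / 2) *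
        (1 + c' * (z ^ 2 / (1 + a * τ ^ (2 * α)) ^ β) ^ γ') ^ (-ν)) *
        regIncBeta (1 - (z / (2 * T ^ γ)) ^ 2) (((d:ℝ) + 1) / 2) (1 / 2)) ≤
      (2 * T ^ γ) ^ (d - 1) * σ2 * regIncBeta 1 (((d:ℝ) + 1) / 2) (1/2) * (2 * T ^ γ) := by
    intro τ hτ
    calc (∫ z in (0:ℝ)..(2 * T ^ γ), z ^ (d - 1) * (σ2 / (1 + a * τ ^ (2 * α)) ^ (β * (d:ℝ) / 2) *
        (1 + c' * (z ^ 2 / (1 + a * τ ^ (2 * α)) ^ β) ^ γ') ^ (-ν)) *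
        regIncBeta (1 - (z / (2 * T ^ γ)) ^ 2) (((d:ℝ) + 1) / 2) (1 / 2))
        ≤ ∫ _z in (0:ℝ)..(2 * T ^ γ),
          (2 * T ^ γ) ^ (d - 1) * σ2 * regIncBeta 1 (((d:ℝ) + 1) / 2) (1/2) :=
          intervalIntegral.integral_mono_on h2R (gint τ hτ) intervalIntegrable_const
            (fun z hz => gub τ hτ z hz)
      _ = (2 * T ^ γ) ^ (d - 1) * σ2 * regIncBeta 1 (((d:ℝ) + 1) / 2) (1/2) * (2 * T ^ γ) := by
          rw [intervalIntegral.integral_const, smul_eq_mul]; ring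
  have fint : IntervalIntegrable (fun τ : ℝ => (1 - τ / T) *
      ∫ z in (0:ℝ)..(2 * T ^ γ), z ^ (d - 1) * (σ2 / (1 + a * τ ^ (2 * α)) ^ (β * (d:ℝ) / 2) *
        (1 + c' * (z ^ 2 / (1 + a * τ ^ (2 * α)) ^ β) ^ γ') ^ (-ν)) *
        regIncBeta (1 - (z / (2 * T ^ γ)) ^ 2) (((d:ℝ) + 1) / 2) (1 / 2)) volume 0 T := by
    rw [intervalIntegrable_iff_integrableOn_Ioc_of_le hT0.le]
    have huncurry : AEStronglyMeasurable (fun q : ℝ × ℝ =>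
        q.2 ^ (d - 1) * (σ2 / (1 + a * q.1 ^ (2 * α)) ^ (β * (d:ℝ) / 2) *
          (1 + c' * (q.2 ^ 2 / (1 + a * q.1 ^ (2 * α)) ^ β) ^ γ') ^ (-ν)) *
          regIncBeta (1 - (q.2 / (2 * T ^ γ)) ^ 2) (((d:ℝ) + 1) / 2) (1 / 2))
        ((volume.restrict (Ioc 0 T)).prod (volume.restrict (Ioc 0 (2 * T ^ γ)))) := by
      rw [Measure.prod_restrict]
      exact (gcont.mono (prod_mono Ioc_subset_Icc_self Ioc_subset_Icc_self)).aestronglyMeasurable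
        (measurableSet_Ioc.prod measurableSet_Ioc)
    have h1 := huncurry.integral_prod_right'
    have heq : ∀ τ : ℝ, (∫ z in (0:ℝ)..(2 * T ^ γ), z ^ (d - 1) * (σ2 / (1 + a * τ ^ (2 * α)) ^ (β * (d:ℝ) / 2) *
        (1 + c' * (z ^ 2 / (1 + a * τ ^ (2 * α)) ^ β) ^ γ') ^ (-ν)) *
        regIncBeta (1 - (z / (2 * T ^ γ)) ^ 2) (((d:ℝ) + 1) / 2) (1 / 2)) =
        (∫ z in Ioc (0:ℝ) (2 * T ^ γ), z ^ (d - 1) * (σ2 / (1 + a * τ ^ (2 * α)) ^ (β * (d:ℝ) / 2) *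
        (1 + c' * (z ^ 2 / (1 + a * τ ^ (2 * α)) ^ β) ^ γ') ^ (-ν)) *
        regIncBeta (1 - (z / (2 * T ^ γ)) ^ 2) (((d:ℝ) + 1) / 2) (1 / 2)) :=
      fun τ => intervalIntegral.integral_of_le h2R
    have h2 : AEStronglyMeasurable (fun τ : ℝ => (1 - τ / T) *
        ∫ z in (0:ℝ)..(2 * T ^ γ), z ^ (d - 1) * (σ2 / (1 + a * τ ^ (2 * α)) ^ (β * (d:ℝ) / 2) *
        (1 + c' * (z ^ 2 / (1 + a * τ ^ (2 * α)) ^ β) ^ γ') ^ (-ν)) *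
        regIncBeta (1 - (z / (2 * T ^ γ)) ^ 2) (((d:ℝ) + 1) / 2) (1 / 2)) (volume.restrict (Ioc 0 T)) := by
      simp only [heq]
      exact ((continuous_const.sub (continuous_id.div_const T)).aestronglyMeasurable).mul h1
    refine Integrable.mono' (g := fun _ : ℝ =>
        (2 * T ^ γ) ^ (d - 1) * σ2 * regIncBeta 1 (((d:ℝ) + 1) / 2) (1/2) * (2 * T ^ γ))
        (integrableOn_const measure_Ioc_lt_top.ne) h2 ?_
    refine (ae_restrict_iff' measurableSet_Ioc).2 (Filter.Eventually.of_forall fun τ hτ => ?_)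
    have hτ' : τ ∈ Icc (0:ℝ) T := Ioc_subset_Icc_self hτ
    rw [Real.norm_eq_abs, abs_mul]
    have ha1 : |1 - τ / T| ≤ 1 := by
      rw [abs_le]
      constructor
      · have : τ / T ≤ 1 := div_le_one_of_le₀ hτ'.2 hT0.le
        linarith
      · have : 0 ≤ τ / T := div_nonneg hτ'.1 hT0.le
        linarith
    have ha2 : |∫ z in (0:ℝ)..(2 * T ^ γ), z ^ (d - 1) * (σ2 / (1 + a * τ ^ (2 * α)) ^ (β * (d:ℝ) / 2) *
        (1 + c' * (z ^ 2 / (1 + a * τ ^ (2 * α)) ^ β) ^ γ') ^ (-ν)) *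
        regIncBeta (1 - (z / (2 * T ^ γ)) ^ 2) (((d:ℝ) + 1) / 2) (1 / 2)| ≤
        (2 * T ^ γ) ^ (d - 1) * σ2 * regIncBeta 1 (((d:ℝ) + 1) / 2) (1/2) * (2 * T ^ γ) := by
      rw [abs_of_nonneg (innernn τ hτ')]
      exact innerle τ hτ'
    calc |1 - τ / T| * |∫ z in (0:ℝ)..(2 * T ^ γ), z ^ (d - 1) * (σ2 / (1 + a * τ ^ (2 * α)) ^ (β * (d:ℝ) / 2) *
        (1 + c' * (z ^ 2 / (1 + a * τ ^ (2 * α)) ^ β) ^ γ') ^ (-ν)) *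
        regIncBeta (1 - (z / (2 * T ^ γ)) ^ 2) (((d:ℝ) + 1) / 2) (1 / 2)|
        ≤ 1 * ((2 * T ^ γ) ^ (d - 1) * σ2 * regIncBeta 1 (((d:ℝ) + 1) / 2) (1/2) * (2 * T ^ γ)) :=
          mul_le_mul ha1 ha2 (abs_nonneg _) zero_le_one
      _ = _ := one_mul _
  set e : ℝ := 2 * γ' * (γ - α * β) with hedef
  have he : 0 < e := by
    have : (0:ℝ) < 2 * γ' := by linarith
    rw [hedef]; exact mul_pos this hγαβ'
  have hcast : ((d - 1 : ℕ) : ℝ) = (d:ℝ) - 1 := by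
    have := Nat.cast_sub (R := ℝ) hd; simpa using this
  set mlow : ℝ := ((1/2:ℝ)^(d-1) * T^(γ*((d:ℝ)-1))) *
      ((σ2 * ((1+a) ^ (-(β*(d:ℝ)/2)) * T ^ (-(α*β*(d:ℝ))))) *
        (K ^ (-ν) * T ^ (-(e*ν)))) * B with hmlowdef
  have hmlownn : 0 ≤ mlow := by
    rw [hmlowdef]
    refine mul_nonneg (mul_nonneg (mul_nonneg (by positivity) (Real.rpow_nonneg hT0.le _))
      (mul_nonneg (mul_nonneg hσ2.le (mul_nonneg (Real.rpow_nonneg (by linarith) _)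
        (Real.rpow_nonneg hT0.le _)))
      (mul_nonneg (Real.rpow_nonneg hK.le _) (Real.rpow_nonneg hT0.le _)))) hB.le
  have hpoint : ∀ τ ∈ Icc (T/2) (3/4*T), ∀ z ∈ Icc (T^γ/2) (T^γ),
      mlow ≤ z ^ (d - 1) * (σ2 / (1 + a * τ ^ (2 * α)) ^ (β * (d:ℝ) / 2) *
          (1 + c' * (z ^ 2 / (1 + a * τ ^ (2 * α)) ^ β) ^ γ') ^ (-ν)) *
          regIncBeta (1 - (z / (2 * T ^ γ)) ^ 2) (((d:ℝ) + 1) / 2) (1 / 2) := by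
    intro τ hτ z hz
    rw [hmlowdef]
    have hτ0 : 0 ≤ τ := le_trans (by linarith) hτ.1
    have hτT : τ ≤ T := le_trans hτ.2 (by linarith)
    have hz0 : 0 ≤ z := le_trans (by positivity) hz.1
    have hD := hDpos τ hτ0
    have hx0 : (0:ℝ) ≤ z ^ 2 / (1 + a * τ ^ (2*α)) ^ β :=
      div_nonneg (sq_nonneg _) (Real.rpow_pos_of_pos hD _).le
    have hxγnn : (0:ℝ) ≤ (z ^ 2 / (1 + a * τ ^ (2*α)) ^ β) ^ γ' := Real.rpow_nonneg hx0 _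
    have hbpos : (0:ℝ) < 1 + c' * (z ^ 2 / (1 + a * τ ^ (2*α)) ^ β) ^ γ' := by nlinarith
    have h1 : (1/2:ℝ)^(d-1) * T^(γ*((d:ℝ)-1)) ≤ z ^ (d-1) := by
      have hL1 : (T^γ/2)^(d-1) = (1/2:ℝ)^(d-1) * T^(γ*((d:ℝ)-1)) := by
        rw [div_pow, ← Real.rpow_natCast (T^γ) (d-1), ← Real.rpow_mul hT0.le, hcast,
          div_pow, one_pow]
        ring
      rw [← hL1]
      exact pow_le_pow_left₀ (by positivity) hz.1 _
    have h2 : σ2 * ((1+a) ^ (-(β*(d:ℝ)/2)) * T ^ (-(α*β*(d:ℝ)))) ≤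
        σ2 / (1 + a * τ ^ (2*α)) ^ (β*(d:ℝ)/2) := by
      have hr1 : τ ^ (2*α) ≤ T ^ (2*α) := Real.rpow_le_rpow hτ0 hτT (by positivity)
      have hr2 : (1:ℝ) ≤ T ^ (2*α) := Real.one_le_rpow hT1 (by positivity)
      have hDle : 1 + a * τ ^ (2*α) ≤ (1+a) * T ^ (2*α) := by nlinarith
      have hDrle : (1 + a * τ ^ (2*α)) ^ (β*(d:ℝ)/2) ≤
          (1+a) ^ (β*(d:ℝ)/2) * T ^ (α*β*(d:ℝ)) := by
        calc (1 + a * τ ^ (2*α)) ^ (β*(d:ℝ)/2)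
            ≤ ((1+a) * T ^ (2*α)) ^ (β*(d:ℝ)/2) :=
              Real.rpow_le_rpow hD.le hDle (by positivity)
          _ = (1+a) ^ (β*(d:ℝ)/2) * T ^ (α*β*(d:ℝ)) := by
              rw [Real.mul_rpow (by linarith) (Real.rpow_nonneg hT0.le _),
                ← Real.rpow_mul hT0.le, show 2*α*(β*(d:ℝ)/2) = α*β*(d:ℝ) by ring]
      have hstep : σ2 * ((1+a) ^ (-(β*(d:ℝ)/2)) * T ^ (-(α*β*(d:ℝ)))) =
          σ2 / ((1+a) ^ (β*(d:ℝ)/2) * T ^ (α*β*(d:ℝ))) := by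
        rw [Real.rpow_neg (by linarith), Real.rpow_neg hT0.le]
        field_simp
      rw [hstep]
      exact div_le_div_of_nonneg_left hσ2.le (Real.rpow_pos_of_pos hD _) hDrle
    have h3 : K ^ (-ν) * T ^ (-(e*ν)) ≤
        (1 + c' * (z ^ 2 / (1 + a * τ ^ (2*α)) ^ β) ^ γ') ^ (-ν) := by
      have hxle : z ^ 2 / (1 + a * τ ^ (2*α)) ^ β ≤ c₀ * T ^ (2*(γ-α*β)) := by
        have hz2 : z ^ 2 ≤ (T^γ) ^ 2 := pow_le_pow_left₀ hz0 hz.2 2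
        have hq : (T/2) ^ (2*α) ≤ τ ^ (2*α) :=
          Real.rpow_le_rpow (by positivity) hτ.1 (by positivity)
        have hq0 : (0:ℝ) ≤ (T/2) ^ (2*α) := Real.rpow_nonneg (by positivity) _
        have hden : a * (T/2) ^ (2*α) ≤ 1 + a * τ ^ (2*α) := by nlinarith
        have hdpos : (0:ℝ) < (a * (T/2) ^ (2*α)) ^ β :=
          Real.rpow_pos_of_pos (by positivity) β
        have hdenr : (a * (T/2) ^ (2*α)) ^ β ≤ (1 + a * τ ^ (2*α)) ^ β :=
          Real.rpow_le_rpow (by positivity) hden hβ.le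
        calc z ^ 2 / (1 + a * τ ^ (2*α)) ^ β ≤ (T^γ) ^ 2 / (a * (T/2) ^ (2*α)) ^ β :=
              div_le_div₀ (by positivity) hz2 hdpos hdenr
          _ = c₀ * T ^ (2*(γ-α*β)) := by
              rw [← Real.rpow_natCast (T^γ) 2, ← Real.rpow_mul hT0.le,
                Real.mul_rpow ha.le (Real.rpow_nonneg (by positivity) _),
                ← Real.rpow_mul (by positivity : (0:ℝ) ≤ T/2),
                Real.div_rpow hT0.le (by norm_num : (0:ℝ) ≤ 2),
                hc₀def, show (2:ℝ)*(γ-α*β) = γ*((2:ℕ):ℝ) - 2*α*β by push_cast; ring,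
                Real.rpow_sub hT0]
              have h2ab : ((2:ℝ) ^ (2*α*β)) ≠ 0 := (Real.rpow_pos_of_pos two_pos _).ne'
              have haβ : (a:ℝ) ^ β ≠ 0 := (Real.rpow_pos_of_pos ha _).ne'
              have hT2 : (T:ℝ) ^ (2*α*β) ≠ 0 := (Real.rpow_pos_of_pos hT0 _).ne'
              field_simp
      have h1' : (z ^ 2 / (1 + a * τ ^ (2*α)) ^ β) ^ γ' ≤ c₀ ^ γ' * T ^ e := by
        calc (z ^ 2 / (1 + a * τ ^ (2*α)) ^ β) ^ γ' ≤ (c₀ * T ^ (2*(γ-α*β))) ^ γ' :=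
              Real.rpow_le_rpow hx0 hxle hγ'.le
          _ = c₀ ^ γ' * T ^ e := by
              rw [Real.mul_rpow hc₀.le (Real.rpow_nonneg hT0.le _),
                ← Real.rpow_mul hT0.le, show 2*(γ-α*β)*γ' = e by rw [hedef]; ring]
      have h2' : (1:ℝ) ≤ T ^ e := Real.one_le_rpow hT1 he.le
      have hbase : 1 + c' * (z ^ 2 / (1 + a * τ ^ (2*α)) ^ β) ^ γ' ≤ K * T ^ e := by
        have h3' : c' * (z ^ 2 / (1 + a * τ ^ (2*α)) ^ β) ^ γ' ≤ c' * (c₀ ^ γ' * T ^ e) :=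
          mul_le_mul_of_nonneg_left h1' hc'.le
        calc 1 + c' * (z ^ 2 / (1 + a * τ ^ (2*α)) ^ β) ^ γ'
            ≤ T ^ e + c' * (c₀ ^ γ' * T ^ e) := add_le_add h2' h3'
          _ = K * T ^ e := by rw [hKdef]; ring
      calc K ^ (-ν) * T ^ (-(e*ν)) = (K * T ^ e) ^ (-ν) := by
            rw [Real.mul_rpow hK.le (Real.rpow_nonneg hT0.le _),
              ← Real.rpow_mul hT0.le, mul_neg]
        _ ≤ _ := Real.rpow_le_rpow_of_nonpos hbpos hbase (by linarith)
    have h4 : B ≤ regIncBeta (1 - (z / (2 * T ^ γ)) ^ 2) (((d:ℝ)+1)/2) (1/2) := by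
      have hzr : z / (2 * T ^ γ) ≤ 1/2 := by
        rw [div_le_iff₀ (by positivity)]; nlinarith [hz.2]
      have hzr0 : 0 ≤ z / (2 * T ^ γ) := div_nonneg hz0 h2R
      rw [hBdef]
      exact ribAux_mono hp1 (by norm_num) (by nlinarith) (by nlinarith)
    have hA1nn : 0 ≤ σ2 / (1 + a * τ ^ (2*α)) ^ (β*(d:ℝ)/2) :=
      div_nonneg hσ2.le (Real.rpow_nonneg hD.le _)
    have hAnn : (0:ℝ) ≤ σ2 / (1 + a * τ ^ (2*α)) ^ (β*(d:ℝ)/2) *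
        (1 + c' * (z ^ 2 / (1 + a * τ ^ (2*α)) ^ β) ^ γ') ^ (-ν) :=
      mul_nonneg hA1nn (Real.rpow_nonneg hbpos.le _)
    have hL3nn : 0 ≤ K ^ (-ν) * T ^ (-(e*ν)) :=
      mul_nonneg (Real.rpow_nonneg hK.le _) (Real.rpow_nonneg hT0.le _)
    have hL23nn : 0 ≤ (σ2 * ((1+a) ^ (-(β*(d:ℝ)/2)) * T ^ (-(α*β*(d:ℝ))))) *
        (K ^ (-ν) * T ^ (-(e*ν))) :=
      mul_nonneg (mul_nonneg hσ2.le (mul_nonneg (Real.rpow_nonneg (by linarith) _)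
        (Real.rpow_nonneg hT0.le _))) hL3nn
    have hznn : (0:ℝ) ≤ z ^ (d-1) := pow_nonneg hz0 _
    have h23 : (σ2 * ((1+a) ^ (-(β*(d:ℝ)/2)) * T ^ (-(α*β*(d:ℝ))))) *
        (K ^ (-ν) * T ^ (-(e*ν))) ≤
        σ2 / (1 + a * τ ^ (2*α)) ^ (β*(d:ℝ)/2) *
          (1 + c' * (z ^ 2 / (1 + a * τ ^ (2*α)) ^ β) ^ γ') ^ (-ν) :=
      mul_le_mul h2 h3 hL3nn hA1nn
    exact mul_le_mul (mul_le_mul h1 h23 hL23nn hznn) h4 hB.le (mul_nonneg hznn hAnn)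
  have hfnn : ∀ τ ∈ Ioc (0:ℝ) T, 0 ≤ (1 - τ/T) *
      ∫ z in (0:ℝ)..(2 * T ^ γ), z ^ (d - 1) * (σ2 / (1 + a * τ ^ (2 * α)) ^ (β * (d:ℝ) / 2) *
          (1 + c' * (z ^ 2 / (1 + a * τ ^ (2 * α)) ^ β) ^ γ') ^ (-ν)) *
          regIncBeta (1 - (z / (2 * T ^ γ)) ^ 2) (((d:ℝ) + 1) / 2) (1 / 2) := by
    intro τ hτ
    have hτ' : τ ∈ Icc (0:ℝ) T := Ioc_subset_Icc_self hτ
    have : τ / T ≤ 1 := div_le_one_of_le₀ hτ'.2 hT0.le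
    exact mul_nonneg (by linarith) (innernn τ hτ')
  have hinlow : ∀ τ ∈ Icc (T/2) (3/4*T), (T^γ - T^γ/2) * mlow ≤
      ∫ z in (0:ℝ)..(2 * T ^ γ), z ^ (d - 1) * (σ2 / (1 + a * τ ^ (2 * α)) ^ (β * (d:ℝ) / 2) *
          (1 + c' * (z ^ 2 / (1 + a * τ ^ (2 * α)) ^ β) ^ γ') ^ (-ν)) *
          regIncBeta (1 - (z / (2 * T ^ γ)) ^ 2) (((d:ℝ) + 1) / 2) (1 / 2) := by
    intro τ hτ
    have hτIcc : τ ∈ Icc (0:ℝ) T := ⟨le_trans (by linarith) hτ.1, le_trans hτ.2 (by linarith)⟩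
    calc (T^γ - T^γ/2) * mlow = ∫ _z in (T^γ/2)..(T^γ), mlow := by
          rw [intervalIntegral.integral_const, smul_eq_mul]
      _ ≤ ∫ z in (T^γ/2)..(T^γ), z ^ (d - 1) * (σ2 / (1 + a * τ ^ (2 * α)) ^ (β * (d:ℝ) / 2) *
          (1 + c' * (z ^ 2 / (1 + a * τ ^ (2 * α)) ^ β) ^ γ') ^ (-ν)) *
          regIncBeta (1 - (z / (2 * T ^ γ)) ^ 2) (((d:ℝ) + 1) / 2) (1 / 2) :=
          intervalIntegral.integral_mono_on (by linarith) intervalIntegrable_const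
            ((gint τ hτIcc).mono_set (by
              rw [uIcc_of_le (by linarith : T^γ/2 ≤ T^γ), uIcc_of_le h2R]
              exact Icc_subset_Icc (by positivity) (by linarith)))
            (fun z hz => hpoint τ hτ z hz)
      _ ≤ ∫ z in (0:ℝ)..(2 * T ^ γ), z ^ (d - 1) * (σ2 / (1 + a * τ ^ (2 * α)) ^ (β * (d:ℝ) / 2) *
          (1 + c' * (z ^ 2 / (1 + a * τ ^ (2 * α)) ^ β) ^ γ') ^ (-ν)) *
          regIncBeta (1 - (z / (2 * T ^ γ)) ^ 2) (((d:ℝ) + 1) / 2) (1 / 2) :=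
          intervalIntegral.integral_mono_interval (by positivity) (by linarith) (by linarith)
            ((ae_restrict_iff' measurableSet_Ioc).2 (Filter.Eventually.of_forall
              fun z hz => gnn τ hτIcc z (Ioc_subset_Icc_self hz)))
            (gint τ hτIcc)
  have hflow : ∀ τ ∈ Icc (T/2) (3/4*T),
      1/4 * ((T^γ - T^γ/2) * mlow) ≤ (1 - τ/T) *
        ∫ z in (0:ℝ)..(2 * T ^ γ), z ^ (d - 1) * (σ2 / (1 + a * τ ^ (2 * α)) ^ (β * (d:ℝ) / 2) *
          (1 + c' * (z ^ 2 / (1 + a * τ ^ (2 * α)) ^ β) ^ γ') ^ (-ν)) *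
          regIncBeta (1 - (z / (2 * T ^ γ)) ^ 2) (((d:ℝ) + 1) / 2) (1 / 2) := by
    intro τ hτ
    have h14 : 1/4 ≤ 1 - τ/T := by
      have : τ / T ≤ 3/4 := by rw [div_le_iff₀ hT0]; linarith [hτ.2]
      linarith
    exact mul_le_mul h14 (hinlow τ hτ) (mul_nonneg (by linarith) hmlownn) (by linarith)
  have step : (3/4*T - T/2) * (1/4 * ((T^γ - T^γ/2) * mlow)) ≤
      ∫ τ in (0:ℝ)..T, (1 - τ/T) * ∫ z in (0:ℝ)..(2 * T ^ γ), z ^ (d - 1) * (σ2 / (1 + a * τ ^ (2 * α)) ^ (β * (d:ℝ) / 2) *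
          (1 + c' * (z ^ 2 / (1 + a * τ ^ (2 * α)) ^ β) ^ γ') ^ (-ν)) *
          regIncBeta (1 - (z / (2 * T ^ γ)) ^ 2) (((d:ℝ) + 1) / 2) (1 / 2) := by
    calc (3/4*T - T/2) * (1/4 * ((T^γ - T^γ/2) * mlow)) =
        ∫ _τ in (T/2)..(3/4*T), 1/4 * ((T^γ - T^γ/2) * mlow) := by
          rw [intervalIntegral.integral_const, smul_eq_mul]
      _ ≤ ∫ τ in (T/2)..(3/4*T), (1 - τ/T) * ∫ z in (0:ℝ)..(2 * T ^ γ), z ^ (d - 1) * (σ2 / (1 + a * τ ^ (2 * α)) ^ (β * (d:ℝ) / 2) *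
          (1 + c' * (z ^ 2 / (1 + a * τ ^ (2 * α)) ^ β) ^ γ') ^ (-ν)) *
          regIncBeta (1 - (z / (2 * T ^ γ)) ^ 2) (((d:ℝ) + 1) / 2) (1 / 2) :=
          intervalIntegral.integral_mono_on (by linarith) intervalIntegrable_const
            (fint.mono_set (by
              rw [uIcc_of_le (by linarith : T/2 ≤ 3/4*T), uIcc_of_le hT0.le]
              exact Icc_subset_Icc (by positivity) (by linarith)))
            hflow
      _ ≤ _ := intervalIntegral.integral_mono_interval (by positivity) (by linarith)
            (by linarith)
            ((ae_restrict_iff' measurableSet_Ioc).2 (Filter.Eventually.of_forall hfnn)) fint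
  refine le_trans (le_of_eq ?_) step
  have expand : T ^ (1 + γ*(d:ℝ) - α*β*(d:ℝ) - e*ν) =
      T ^ (1:ℝ) * T ^ γ * T ^ (γ*((d:ℝ)-1)) * T ^ (-(α*β*(d:ℝ))) * T ^ (-(e*ν)) := by
    rw [← Real.rpow_add hT0, ← Real.rpow_add hT0, ← Real.rpow_add hT0, ← Real.rpow_add hT0]
    congr 1; ring
  rw [hmlowdef, expand, Real.rpow_one]
  ring

set_option maxHeartbeats 1000000 in
theorem stmt15 (d : ℕ) (hd : 1 ≤ d) (σ2 a c' α β γ' ν γ δ₁ δ₂ : ℝ)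
    (hσ2 : 0 < σ2) (ha : 0 < a) (hc' : 0 < c')
    (hα : 0 < α) (hα1 : α ≤ 1) (hβ : 0 < β) (hβ1 : β ≤ 1)
    (hγ' : 0 < γ') (hγ'1 : γ' ≤ 1) (hν : 0 < ν)
    (hγαβ : α * β < γ) (hγ'ν : γ' * ν < 1 / (2 * (γ - α * β)))
    (hδ₁ : δ₁ ∈ Set.Ioo 0 (1 - 2 * ν * γ' * (γ - α * β)))
    (hδ₂ : δ₂ ∈ Set.Ioo 0 (1 - α * β / γ))
    (C : ℝ → ℝ → ℝ)
    (hC : ∀ z τ : ℝ, C z τ =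
      σ2 / (1 + a * τ ^ (2 * α)) ^ (β * d / 2) *
        (1 + c' * (z ^ 2 / (1 + a * τ ^ (2 * α)) ^ β) ^ γ') ^ (-ν)) :
    Tendsto (fun T : ℝ => T ^ (-δ₁ - γ * d * δ₂) *
        ∫ τ in (0:ℝ)..T, (1 - τ / T) *
          ∫ z in (0:ℝ)..(2 * T ^ γ),
            z ^ (d - 1) * C z τ *
              regIncBeta (1 - (z / (2 * T ^ γ)) ^ 2) (((d : ℝ) + 1) / 2) (1 / 2))
      atTop atTop := by
  obtain ⟨hδ₁0, hδ₁1⟩ := hδ₁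
  obtain ⟨hδ₂0, hδ₂1⟩ := hδ₂
  have hd1 : (1:ℝ) ≤ (d:ℝ) := by exact_mod_cast hd
  have hαβ : 0 < α * β := mul_pos hα hβ
  have hγpos : 0 < γ := hαβ.trans hγαβ
  have hp1 : (1:ℝ) ≤ ((d : ℝ) + 1) / 2 := by linarith
  have hB : 0 < regIncBeta (3/4) (((d:ℝ)+1)/2) (1/2) := ribAux_pos hp1
  have hc₀ : 0 < (2:ℝ) ^ (2*α*β) / a ^ β :=
    div_pos (Real.rpow_pos_of_pos two_pos _) (Real.rpow_pos_of_pos ha _)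
  have hK : 0 < 1 + c' * ((2:ℝ) ^ (2*α*β) / a ^ β) ^ γ' := by
    have := Real.rpow_nonneg hc₀.le γ'; nlinarith
  set cst : ℝ := (1/32) * (1/2:ℝ)^(d-1) * σ2 * (1+a) ^ (-(β*(d:ℝ)/2)) *
      (1 + c' * ((2:ℝ) ^ (2*α*β) / a ^ β) ^ γ') ^ (-ν) *
      regIncBeta (3/4) (((d:ℝ) + 1) / 2) (1/2) with hcstdef
  have hcst : 0 < cst := by
    rw [hcstdef]
    have h1 : (0:ℝ) < (1/2:ℝ)^(d-1) := by positivity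
    have h2 : (0:ℝ) < (1+a) ^ (-(β*(d:ℝ)/2)) := Real.rpow_pos_of_pos (by linarith) _
    have h3 : (0:ℝ) < (1 + c' * ((2:ℝ) ^ (2*α*β) / a ^ β) ^ γ') ^ (-ν) :=
      Real.rpow_pos_of_pos hK _
    positivity
  set E : ℝ := (-δ₁ - γ*(d:ℝ)*δ₂) + (1 + γ*(d:ℝ) - α*β*(d:ℝ) - 2*γ'*(γ-α*β)*ν) with hEdef
  have hγδ₂ : γ * δ₂ < γ - α * β := by
    have h := mul_lt_mul_of_pos_left hδ₂1 hγpos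
    rw [mul_sub, mul_one, mul_div_cancel₀ _ hγpos.ne'] at h
    exact h
  have hE : 0 < E := by
    rw [hEdef]
    have h2 : (1:ℝ) * (γ - α*β - γ*δ₂) ≤ (d:ℝ) * (γ - α*β - γ*δ₂) :=
      mul_le_mul_of_nonneg_right hd1 (by linarith)
    nlinarith
  refine tendsto_atTop_mono' atTop ?_ ((tendsto_rpow_atTop hE).const_mul_atTop hcst)
  filter_upwards [eventually_ge_atTop (1:ℝ)] with T hT1
  have hT0 : (0:ℝ) < T := lt_of_lt_of_le one_pos hT1
  have hkey := stmt15_key d hd σ2 a c' α β γ' ν γ hσ2 ha hc' hα hβ hγ' hν hγαβ T hT1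
  calc cst * T ^ E
      = T ^ (-δ₁ - γ*(d:ℝ)*δ₂) *
        (cst * T ^ (1 + γ*(d:ℝ) - α*β*(d:ℝ) - 2*γ'*(γ-α*β)*ν)) := by
        rw [hEdef, Real.rpow_add hT0]; ring
    _ ≤ T ^ (-δ₁ - γ * (d:ℝ) * δ₂) *
        ∫ τ in (0:ℝ)..T, (1 - τ / T) *
          ∫ z in (0:ℝ)..(2 * T ^ γ),
            z ^ (d - 1) * C z τ *
              regIncBeta (1 - (z / (2 * T ^ γ)) ^ 2) (((d : ℝ) + 1) / 2) (1 / 2) := by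
        refine mul_le_mul_of_nonneg_left ?_ (Real.rpow_nonneg hT0.le _)
        simp only [hC]
        rw [hcstdef]
        exact hkey
end
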